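/- arXiv:0904.4070 — 5 statements merged into one kernel-verified Lean document; each statement's English description precedes it below -/
import Mathlib

section
/- Let R be a real W*-algebra in B(H) (weakly closed real *-subalgebra with R ∩ iR = {0}, 1 ∈ R). If a, b ∈ R and a + ib ≥ 0 as an operator on H, then a ≥ 0. -/
open Filter Finset
open scoped ComplexOrder Topology

namespace JW

variable {H : Type*} [NormedAddCommGroup H] [InnerProductSpace ℂ H] [CompleteSpace H]

/-- Orthogonal projection predicate. -/
def IsProjection (p : H →L[ℂ] H) : Prop := IsIdempotentElem p ∧ IsSelfAdjoint p

/-- Loewner order: `a ≤ b` iff `b - a` is a positive operator. -/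
def OpLE (a b : H →L[ℂ] H) : Prop := (b - a).IsPositive

/-- The Jordan product `a ∘ b = (ab + ba)/2`. -/
noncomputable def jord (a b : H →L[ℂ] H) : H →L[ℂ] H := (2⁻¹ : ℝ) • (a * b + b * a)

/-- A real W*-algebra: a weakly closed real *-subalgebra `R ⊆ B(H)` with
`R ∩ iR = {0}` and `1 ∈ R`. -/
structure IsRealVNA (R : Set (H →L[ℂ] H)) : Prop where
  zero_mem : (0 : H →L[ℂ] H) ∈ R
  one_mem : (1 : H →L[ℂ] H) ∈ R
  add_mem : ∀ {a b : H →L[ℂ] H}, a ∈ R → b ∈ R → a + b ∈ R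
  smul_mem : ∀ (r : ℝ) {a : H →L[ℂ] H}, a ∈ R → r • a ∈ R
  mul_mem : ∀ {a b : H →L[ℂ] H}, a ∈ R → b ∈ R → a * b ∈ R
  star_mem : ∀ {a : H →L[ℂ] H}, a ∈ R → star a ∈ R
  inter_trivial : ∀ {a : H →L[ℂ] H}, a ∈ R → Complex.I • a ∈ R → a = 0
  wclosed : IsClosed ((ContinuousLinearMapWOT.ofCLM : (H →L[ℂ] H) → (H →WOT[ℂ] H)) '' R)

/-- The self-adjoint part of a set of operators; for a real W*-algebra `R`,
`saPart R` is the associated reversible JW-algebra. -/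
def saPart (R : Set (H →L[ℂ] H)) : Set (H →L[ℂ] H) := {a | a ∈ R ∧ IsSelfAdjoint a}

/-- A faithful normal state on (the self-adjoint part of) an operator algebra `A`,
given as a real-linear functional. Normality is expressed by sequential order
continuity with respect to strong convergence of increasing sequences. -/
structure IsFNState (A : Set (H →L[ℂ] H)) (ρ : (H →L[ℂ] H) →ₗ[ℝ] ℝ) : Prop where
  pos : ∀ a : H →L[ℂ] H, a.IsPositive → 0 ≤ ρ a
  one : ρ 1 = 1
  faithful : ∀ a ∈ A, a.IsPositive → ρ a = 0 → a = 0
  normal : ∀ (x : ℕ → H →L[ℂ] H) (y : H →L[ℂ] H),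
    (∀ n, OpLE (x n) (x (n + 1))) → (∀ n, OpLE (x n) y) →
    (∀ ξ : H, Tendsto (fun n => x n ξ) atTop (𝓝 (y ξ))) →
    Tendsto (fun n => ρ (x n)) atTop (𝓝 (ρ y))

/-- Membership in the bundle determined by a sequence `D` of positive elements of `A`:
nonzero projections `p ∈ A` with `sup_m ‖p(∑_{k≤m} D_k)p‖ < ∞` and `‖p D_m p‖ → 0`. -/
def InBundle (A : Set (H →L[ℂ] H)) (D : ℕ → H →L[ℂ] H) (p : H →L[ℂ] H) : Prop :=
  p ∈ A ∧ IsProjection p ∧ p ≠ 0 ∧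
  (∃ C : ℝ, ∀ m : ℕ, ‖p * (∑ k ∈ Finset.range m, D k) * p‖ ≤ C) ∧
  Tendsto (fun m => ‖p * D m * p‖) atTop (𝓝 0)

/-- Bundle convergence `x_n → l` in the JW-algebra `A` with state `ρ`. -/
def BundleConv (A : Set (H →L[ℂ] H)) (ρ : (H →L[ℂ] H) →ₗ[ℝ] ℝ)
    (x : ℕ → H →L[ℂ] H) (l : H →L[ℂ] H) : Prop :=
  ∃ D : ℕ → H →L[ℂ] H, (∀ m, D m ∈ A ∧ (D m).IsPositive) ∧
    Summable (fun m => ρ (D m)) ∧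
    ∀ p, InBundle A D p → Tendsto (fun n => ‖p * (x n - l) ^ 2 * p‖) atTop (𝓝 0)

/-- Almost uniform convergence in the JW-algebra `A` with state `ρ`. -/
def AUConv (A : Set (H →L[ℂ] H)) (ρ : (H →L[ℂ] H) →ₗ[ℝ] ℝ)
    (x : ℕ → H →L[ℂ] H) (l : H →L[ℂ] H) : Prop :=
  ∀ ε > (0 : ℝ), ∃ p : H →L[ℂ] H, p ∈ A ∧ IsProjection p ∧ ρ (1 - p) < ε ∧
    Tendsto (fun n => ‖p * (x n - l) ^ 2 * p‖) atTop (𝓝 0)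

/-- The enveloping (complex) algebra `W(R) = R + iR` of a real W*-algebra `R`. -/
def envAlg (R : Set (H →L[ℂ] H)) : Set (H →L[ℂ] H) :=
  {w | ∃ u ∈ R, ∃ v ∈ R, w = u + Complex.I • v}

/-- Bundle convergence in a von Neumann algebra `W` with (the restriction to the reals of)
a state `ρ₁`: there is a sequence `D` of positives in `W` with `∑ ρ₁(D_m) < ∞` such that
`‖(x_n - l)p‖ → 0` for every projection in the corresponding bundle. -/
def BundleConvW (W : Set (H →L[ℂ] H)) (ρ₁ : (H →L[ℂ] H) →ₗ[ℂ] ℂ)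
    (x : ℕ → H →L[ℂ] H) (l : H →L[ℂ] H) : Prop :=
  ∃ D : ℕ → H →L[ℂ] H, (∀ m, D m ∈ W ∧ (D m).IsPositive) ∧
    Summable (fun m => (ρ₁ (D m)).re) ∧
    ∀ p, InBundle W D p → Tendsto (fun n => ‖(x n - l) * p‖) atTop (𝓝 0)



section Statement3Aux

open ContinuousLinearMap Polynomial

variable {R : Set (H →L[ℂ] H)}

lemma IsRealVNA.neg_mem' (hR : IsRealVNA R) {x : H →L[ℂ] H} (hx : x ∈ R) : -x ∈ R := by
  simpa using hR.smul_mem (-1) hx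

lemma IsRealVNA.sub_mem' (hR : IsRealVNA R) {x y : H →L[ℂ] H} (hx : x ∈ R) (hy : y ∈ R) :
    x - y ∈ R := by
  rw [sub_eq_add_neg]; exact hR.add_mem hx (hR.neg_mem' hy)

lemma IsRealVNA.isClosed' (hR : IsRealVNA R) : IsClosed R := by
  have h : R = (ContinuousLinearMapWOT.ofCLM : (H →L[ℂ] H) → (H →WOT[ℂ] H)) ⁻¹' ((ContinuousLinearMapWOT.ofCLM : (H →L[ℂ] H) → (H →WOT[ℂ] H)) '' R) :=
    (Set.preimage_image_eq _ ContinuousLinearMapWOT.ofCLM_injective).symm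
  rw [h]
  exact hR.wclosed.preimage ContinuousLinearMapWOT.continuous_ofCLM

lemma IsRealVNA.zero_of_add_smul_I (hR : IsRealVNA R) {X Y : H →L[ℂ] H}
    (hX : X ∈ R) (hY : Y ∈ R) (h : X + Complex.I • Y = 0) : X = 0 ∧ Y = 0 := by
  have h1 : Complex.I • Y = -X := by rw [eq_neg_iff_add_eq_zero, add_comm]; exact h
  have hY0 : Y = 0 := hR.inter_trivial hY (h1 ▸ hR.neg_mem' hX)
  exact ⟨by simpa [hY0] using h, hY0⟩

/-- Pairs `(u + iv, u - iv)` with `u, v ∈ R`. -/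
def pairSet (R : Set (H →L[ℂ] H)) : Set ((H →L[ℂ] H) × (H →L[ℂ] H)) :=
  {w | ∃ u ∈ R, ∃ v ∈ R, w.1 = u + Complex.I • v ∧ w.2 = u - Complex.I • v}

lemma mul_expand (P Q S T : H →L[ℂ] H) :
    (P + Complex.I • Q) * (S + Complex.I • T)
      = (P * S - Q * T) + Complex.I • (P * T + Q * S) := by
  simp only [mul_add, add_mul, smul_mul_assoc, mul_smul_comm, smul_smul,
    Complex.I_mul_I, neg_one_smul, smul_add]
  abel

lemma mul_expand' (P Q S T : H →L[ℂ] H) :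
    (P - Complex.I • Q) * (S - Complex.I • T)
      = (P * S - Q * T) - Complex.I • (P * T + Q * S) := by
  simp only [sub_mul, mul_sub, mul_add, add_mul, smul_mul_assoc, mul_smul_comm]
  match_scalars <;> simp [Complex.ext_iff] <;> norm_num

lemma pairSet_isClosed (hR : IsRealVNA R) : IsClosed (pairSet R) := by
  have key : pairSet R = (fun w : (H →L[ℂ] H) × (H →L[ℂ] H) =>
      ((2⁻¹ : ℂ) • (w.1 + w.2), (-(2⁻¹) * Complex.I : ℂ) • (w.1 - w.2))) ⁻¹' (R ×ˢ R) := by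
    ext w
    constructor
    · rintro ⟨u, hu, v, hv, h1, h2⟩
      have e1 : (2⁻¹ : ℂ) • (w.1 + w.2) = u := by
        rw [h1, h2]
        match_scalars <;> simp [Complex.ext_iff] <;> norm_num
      have e2 : ((-(2⁻¹) * Complex.I : ℂ)) • (w.1 - w.2) = v := by
        rw [h1, h2]
        match_scalars <;> simp [Complex.ext_iff] <;> norm_num
      exact Set.mem_preimage.mpr (by rw [Set.mem_prod]; exact ⟨e1 ▸ hu, e2 ▸ hv⟩)
    · intro hw
      rw [Set.mem_preimage, Set.mem_prod] at hw
      refine ⟨_, hw.1, _, hw.2, ?_, ?_⟩ <;>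
        · match_scalars <;> simp [Complex.ext_iff] <;> norm_num
  rw [key]
  exact ((hR.isClosed'.prod hR.isClosed')).preimage (by fun_prop)

lemma pairSet_mul (hR : IsRealVNA R) {w w' : (H →L[ℂ] H) × (H →L[ℂ] H)}
    (h : w ∈ pairSet R) (h' : w' ∈ pairSet R) : (w.1 * w'.1, w.2 * w'.2) ∈ pairSet R := by
  obtain ⟨u, hu, v, hv, e1, e2⟩ := h
  obtain ⟨u', hu', v', hv', e1', e2'⟩ := h'
  refine ⟨u * u' - v * v', hR.sub_mem' (hR.mul_mem hu hu') (hR.mul_mem hv hv'),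
    u * v' + v * u', hR.add_mem (hR.mul_mem hu hv') (hR.mul_mem hv hu'), ?_, ?_⟩
  · rw [e1, e1']; exact mul_expand u v u' v'
  · rw [e2, e2']; exact mul_expand' u v u' v'

lemma pairSet_add (hR : IsRealVNA R) {w w' : (H →L[ℂ] H) × (H →L[ℂ] H)}
    (h : w ∈ pairSet R) (h' : w' ∈ pairSet R) : (w.1 + w'.1, w.2 + w'.2) ∈ pairSet R := by
  obtain ⟨u, hu, v, hv, e1, e2⟩ := h
  obtain ⟨u', hu', v', hv', e1', e2'⟩ := h'
  refine ⟨u + u', hR.add_mem hu hu', v + v', hR.add_mem hv hv', ?_, ?_⟩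
  · rw [e1, e1', smul_add]; abel
  · rw [e2, e2', smul_add]; abel

lemma pairSet_algebraMap (hR : IsRealVNA R) (r : ℝ) :
    ((algebraMap ℝ (H →L[ℂ] H) r, algebraMap ℝ (H →L[ℂ] H) r) :
      (H →L[ℂ] H) × (H →L[ℂ] H)) ∈ pairSet R := by
  refine ⟨algebraMap ℝ (H →L[ℂ] H) r, ?_, 0, hR.zero_mem, by simp, by simp⟩
  rw [Algebra.algebraMap_eq_smul_one]
  exact hR.smul_mem r hR.one_mem

lemma pairSet_aeval (hR : IsRealVNA R) {y z : H →L[ℂ] H}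
    (hyz : ((y, z) : (H →L[ℂ] H) × (H →L[ℂ] H)) ∈ pairSet R) (p : ℝ[X]) :
    ((aeval y p, aeval z p) : (H →L[ℂ] H) × (H →L[ℂ] H)) ∈ pairSet R := by
  induction p using Polynomial.induction_on with
  | C r => simpa using pairSet_algebraMap hR r
  | add p q hp hq => simpa using pairSet_add hR hp hq
  | monomial n r hp =>
      have h2 : ((aeval y (C r * X ^ n) * y, aeval z (C r * X ^ n) * z) :
          (H →L[ℂ] H) × (H →L[ℂ] H)) ∈ pairSet R := pairSet_mul hR hp hyz
      simpa [pow_succ, ← mul_assoc, map_mul] using h2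

lemma IsRealVNA.sa_parts (hR : IsRealVNA R) {u v : H →L[ℂ] H} (hu : u ∈ R) (hv : v ∈ R)
    (h : IsSelfAdjoint (u + Complex.I • v)) : star u = u ∧ star v = -v := by
  have hstar : star u + Complex.I • (-star v) = u + Complex.I • v := by
    have h0 := h.star_eq
    rwa [star_add, star_smul, Complex.star_def, Complex.conj_I, neg_smul, ← smul_neg] at h0
  have h0 := sub_eq_zero_of_eq hstar
  have hcomp : (star u - u) + Complex.I • (-(star v) - v) = 0 := by
    rw [smul_sub, ← h0]; abel
  obtain ⟨hX0, hY0⟩ := hR.zero_of_add_smul_I (hR.sub_mem' (hR.star_mem hu) hu)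
    (hR.sub_mem' (hR.neg_mem' (hR.star_mem hv)) hv) hcomp
  refine ⟨sub_eq_zero.mp hX0, ?_⟩
  exact neg_eq_iff_eq_neg.mp (sub_eq_zero.mp hY0)

lemma cfc_pair_mem (hR : IsRealVNA R) [Nontrivial H] {P Q : H →L[ℂ] H}
    (hP : P ∈ R) (hQ : Q ∈ R)
    (hy : IsSelfAdjoint (P + Complex.I • Q)) (hz : IsSelfAdjoint (P - Complex.I • Q))
    {f : ℝ → ℝ} (hf : Continuous f) :
    ((cfc f (P + Complex.I • Q), cfc f (P - Complex.I • Q)) :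
      (H →L[ℂ] H) × (H →L[ℂ] H)) ∈ pairSet R := by
  set y := P + Complex.I • Q with hydef
  set z := P - Complex.I • Q with hzdef
  set K : ℝ := max ‖y‖ ‖z‖ with hK
  have hyK : spectrum ℝ y ⊆ Set.Icc (-K) K := fun x hx => by
    have h1 : ‖x‖ ≤ ‖y‖ := spectrum.norm_le_norm_of_mem hx
    rw [Real.norm_eq_abs] at h1
    exact abs_le.mp (h1.trans (le_max_left _ _))
  have hzK : spectrum ℝ z ⊆ Set.Icc (-K) K := fun x hx => by
    have h1 : ‖x‖ ≤ ‖z‖ := spectrum.norm_le_norm_of_mem hx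
    rw [Real.norm_eq_abs] at h1
    exact abs_le.mp (h1.trans (le_max_right _ _))
  have hclosed := pairSet_isClosed hR
  rw [← hclosed.closure_eq, Metric.mem_closure_iff]
  intro ε hε
  obtain ⟨p, hp⟩ := exists_polynomial_near_of_continuousOn (-K) K f hf.continuousOn
    (ε/2) (by positivity)
  refine ⟨(aeval y p, aeval z p), pairSet_aeval hR ⟨P, hP, Q, hQ, rfl, rfl⟩ p, ?_⟩
  have key : ∀ w : H →L[ℂ] H, IsSelfAdjoint w → spectrum ℝ w ⊆ Set.Icc (-K) K →
      dist (cfc f w) (aeval w p) < ε := by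
    intro w hw hwK
    rw [dist_eq_norm, ← cfc_polynomial p w hw,
      ← cfc_sub (f := f) (g := fun x => p.eval x) (a := w) hf.continuousOn
        p.continuous.continuousOn]
    have hb : ‖cfc (fun x => f x - p.eval x) w‖ ≤ ε / 2 := by
      apply norm_cfc_le (by positivity)
      intro x hx
      have := hp x (hwK hx)
      rw [Real.norm_eq_abs, abs_sub_comm]
      exact this.le
    linarith
  rw [Prod.dist_eq]
  exact max_lt (key y hy hyK) (key z hz hzK)

lemma isUnit_mirror (hR : IsRealVNA R) [Nontrivial H] {P Q : H →L[ℂ] H}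
    (hP : P ∈ R) (hQ : Q ∈ R) (hsaY : IsSelfAdjoint (P + Complex.I • Q))
    {t : ℝ} (ht : 0 < t) (hspec : spectrum ℝ (P + Complex.I • Q) ⊆ Set.Ici t) :
    IsUnit (P - Complex.I • Q) := by
  obtain ⟨hPsa, hQskew⟩ := hR.sa_parts hP hQ hsaY
  have hsaZ : IsSelfAdjoint (P - Complex.I • Q) := by
    rw [IsSelfAdjoint, star_sub, star_smul, Complex.star_def, Complex.conj_I, neg_smul,
      hPsa, hQskew]
    simp [smul_neg]
  set y := P + Complex.I • Q with hydef
  set f : ℝ → ℝ := fun x => (max x t)⁻¹ with hfdef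
  have hf : Continuous f := (continuous_id.max continuous_const).inv₀
    fun x => ne_of_gt (lt_of_lt_of_le ht (le_max_right x t))
  obtain ⟨S, hS, T, hT, e1, e2⟩ := cfc_pair_mem hR hP hQ hsaY hsaZ hf
  replace e1 : cfc f y = S + Complex.I • T := e1
  have h2 : cfc (fun x : ℝ => f x * id x) y = 1 := by
    have hcongr : (spectrum ℝ y).EqOn (fun x : ℝ => f x * id x) (fun _ : ℝ => (1:ℝ)) := by
      intro x hx
      have htx : t ≤ x := hspec hx
      simp only [hfdef, id_eq]
      rw [max_eq_left htx]
      exact inv_mul_cancel₀ (ne_of_gt (lt_of_lt_of_le ht htx))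
    rw [cfc_congr hcongr]
    exact cfc_const_one ℝ y hsaY
  have h2' : cfc (fun x : ℝ => id x * f x) y = 1 := by
    rw [cfc_congr (g := fun x : ℝ => f x * id x) (fun x _ => mul_comm _ _)]
    exact h2
  have hfy : cfc f y * y = 1 := by
    have h1 := cfc_mul f id y hf.continuousOn continuous_id.continuousOn
    rw [cfc_id ℝ y hsaY] at h1
    rw [← h1]; exact h2
  have hyf : y * cfc f y = 1 := by
    have h1 := cfc_mul id f y continuous_id.continuousOn hf.continuousOn
    rw [cfc_id ℝ y hsaY] at h1
    rw [← h1]; exact h2'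
  have m1 : (S + Complex.I • T) * (P + Complex.I • Q) = 1 := by rw [← e1]; exact hfy
  have m2 : (P + Complex.I • Q) * (S + Complex.I • T) = 1 := by rw [← e1]; exact hyf
  have c1 : S * P - T * Q = 1 ∧ S * Q + T * P = 0 := by
    have hexp := mul_expand S T P Q
    rw [m1] at hexp
    have h0 : ((S * P - T * Q) - 1) + Complex.I • (S * Q + T * P) = 0 := by
      rw [sub_add_eq_add_sub, ← hexp, sub_self]
    obtain ⟨ha', hb'⟩ := hR.zero_of_add_smul_I
      (hR.sub_mem' (hR.sub_mem' (hR.mul_mem hS hP) (hR.mul_mem hT hQ)) hR.one_mem)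
      (hR.add_mem (hR.mul_mem hS hQ) (hR.mul_mem hT hP)) h0
    exact ⟨sub_eq_zero.mp ha', hb'⟩
  have c2 : P * S - Q * T = 1 ∧ P * T + Q * S = 0 := by
    have hexp := mul_expand P Q S T
    rw [m2] at hexp
    have h0 : ((P * S - Q * T) - 1) + Complex.I • (P * T + Q * S) = 0 := by
      rw [sub_add_eq_add_sub, ← hexp, sub_self]
    obtain ⟨ha', hb'⟩ := hR.zero_of_add_smul_I
      (hR.sub_mem' (hR.sub_mem' (hR.mul_mem hP hS) (hR.mul_mem hQ hT)) hR.one_mem)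
      (hR.add_mem (hR.mul_mem hP hT) (hR.mul_mem hQ hS)) h0
    exact ⟨sub_eq_zero.mp ha', hb'⟩
  have f1 : (P - Complex.I • Q) * (S - Complex.I • T) = 1 := by
    rw [mul_expand', c2.1, c2.2]; simp
  have f2 : (S - Complex.I • T) * (P - Complex.I • Q) = 1 := by
    rw [mul_expand', c1.1, c1.2]; simp
  exact ⟨⟨P - Complex.I • Q, S - Complex.I • T, f1, f2⟩, rfl⟩

end Statement3Aux


/-- in a real W*-algebra `R`, if `a + ib ≥ 0` for `a, b ∈ R`, then `a ≥ 0`. -/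
theorem statement3 (R : Set (H →L[ℂ] H)) (hR : IsRealVNA R)
    (a b : H →L[ℂ] H) (ha : a ∈ R) (hb : b ∈ R)
    (hpos : (a + Complex.I • b).IsPositive) :
    a.IsPositive := by
  rcases subsingleton_or_nontrivial H with hH | hH
  · have hsub : Subsingleton (H →L[ℂ] H) :=
      ⟨fun f g => ContinuousLinearMap.ext fun x => Subsingleton.elim _ _⟩
    rw [Subsingleton.elim a 0]
    exact ContinuousLinearMap.isPositive_zero
  · have hc : (0 : H →L[ℂ] H) ≤ a + Complex.I • b :=
      (ContinuousLinearMap.nonneg_iff_isPositive _).mpr hpos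
    obtain ⟨hasa, hbskew⟩ := hR.sa_parts ha hb hpos.isSelfAdjoint
    have hzsa : IsSelfAdjoint (a - Complex.I • b) := by
      rw [IsSelfAdjoint, star_sub, star_smul, Complex.star_def, Complex.conj_I, neg_smul,
        hasa, hbskew]
      simp [smul_neg]
    have hunit : ∀ t : ℝ, 0 < t → IsUnit ((a - Complex.I • b) + t • 1) := by
      intro t ht
      have hP : a + t • (1 : H →L[ℂ] H) ∈ R := hR.add_mem ha (hR.smul_mem t hR.one_mem)
      have hsaY : IsSelfAdjoint ((a + t • (1 : H →L[ℂ] H)) + Complex.I • b) := by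
        have h1 : (a + t • (1 : H →L[ℂ] H)) + Complex.I • b
            = (a + Complex.I • b) + t • 1 := by abel
        rw [h1]
        refine hpos.isSelfAdjoint.add ?_
        rw [IsSelfAdjoint, star_smul]
        simp
      have hspec : spectrum ℝ ((a + t • (1 : H →L[ℂ] H)) + Complex.I • b) ⊆ Set.Ici t := by
        intro x hx
        have heq : algebraMap ℝ (H →L[ℂ] H) x - ((a + t • (1 : H →L[ℂ] H)) + Complex.I • b)
            = algebraMap ℝ (H →L[ℂ] H) (x - t) - (a + Complex.I • b) := by
          rw [Algebra.algebraMap_eq_smul_one, Algebra.algebraMap_eq_smul_one, sub_smul]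
          abel
        have hx' : x - t ∈ spectrum ℝ (a + Complex.I • b) := by
          rw [spectrum.mem_iff] at hx ⊢
          intro hcon
          exact hx (by rw [heq]; exact hcon)
        have h0 : 0 ≤ x - t := spectrum_nonneg_of_nonneg hc hx'
        exact Set.mem_Ici.mpr (by linarith)
      have hu := isUnit_mirror hR hP hb hsaY ht hspec
      have he : (a + t • (1 : H →L[ℂ] H)) - Complex.I • b
          = (a - Complex.I • b) + t • 1 := by abel
      rwa [he] at hu
    have hz : (0 : H →L[ℂ] H) ≤ a - Complex.I • b := by
      rw [StarOrderedRing.nonneg_iff_spectrum_nonneg (R := ℝ) _ hzsa]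
      intro x hx
      by_contra hlt
      push_neg at hlt
      have hu := hunit (-x) (by linarith)
      rw [spectrum.mem_iff] at hx
      apply hx
      have heq : algebraMap ℝ (H →L[ℂ] H) x - (a - Complex.I • b)
          = -((a - Complex.I • b) + (-x) • 1) := by
        rw [Algebra.algebraMap_eq_smul_one, neg_smul]
        abel
      rw [heq]
      exact hu.neg
    have hzpos := (ContinuousLinearMap.nonneg_iff_isPositive _).mp hz
    refine ⟨ContinuousLinearMap.isSelfAdjoint_iff_isSymmetric.mp hasa, ?_⟩
    intro x
    have h1 := hpos.2 x
    have h2 := hzpos.2 x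
    have hsum : (a + Complex.I • b).reApplyInnerSelf x
        + (a - Complex.I • b).reApplyInnerSelf x = 2 * a.reApplyInnerSelf x := by
      simp only [ContinuousLinearMap.reApplyInnerSelf_apply]
      rw [← map_add, ← inner_add_left, ← ContinuousLinearMap.add_apply]
      have hca : (a + Complex.I • b) + (a - Complex.I • b) = (2 : ℂ) • a := by
        match_scalars <;> simp [Complex.ext_iff] <;> norm_num
      rw [hca, ContinuousLinearMap.smul_apply, inner_smul_left]
      simp [Complex.mul_re]
    linarith

end JW
end

section
/- Let A be a reversible JW-algebra with faithful normal state ρ, and let {D_m} ⊂ A⁺ with ∑_{m=1}^∞ ρ(D_m) < ∞. Then for each ε > 0 the bundle P_{(D_m)} contains a projection p with ρ(p^⊥) < 2ε. In particular every bundle is nonempty. -/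
open Filter Finset
open scoped ComplexOrder Topology

namespace JW

variable {H : Type*} [NormedAddCommGroup H] [InnerProductSpace ℂ H] [CompleteSpace H]

section Aux
open Topology ContinuousLinearMap
open scoped InnerProductSpace
set_option synthInstance.maxHeartbeats 1000000
set_option maxHeartbeats 4000000


/-- For a positive operator, `‖a ξ‖ ^ 2 ≤ ‖a‖ * re ⟪a ξ, ξ⟫`. -/
lemma norm_apply_sq_le {a : H →L[ℂ] H} (ha : 0 ≤ a) (ξ : H) :
    ‖a ξ‖ ^ 2 ≤ ‖a‖ * a.reApplyInnerSelf ξ := by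
  have hsa : IsSelfAdjoint a := IsSelfAdjoint.of_nonneg ha
  set s : H →L[ℂ] H := CFC.sqrt a with hs
  have hs0 : 0 ≤ s := CFC.sqrt_nonneg a
  have hssa : IsSelfAdjoint s := IsSelfAdjoint.of_nonneg hs0
  have hss : s * s = a := CFC.sqrt_mul_sqrt_self a ha
  have h1 : a ξ = s (s ξ) := by rw [← hss]; rfl
  have h2 : ‖s ξ‖ ^ 2 = a.reApplyInnerSelf ξ := by
    rw [ContinuousLinearMap.reApplyInnerSelf_apply, ← hss]
    have : ⟪(s * s) ξ, ξ⟫_ℂ = ⟪s ξ, s ξ⟫_ℂ := by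
      rw [ContinuousLinearMap.mul_apply]
      rw [← ContinuousLinearMap.adjoint_inner_left]
      congr 1
      exact (congrFun (congrArg _ hssa.adjoint_eq) (s ξ)).symm
    rw [this, inner_self_eq_norm_sq]
  have h3 : ‖s‖ ^ 2 = ‖a‖ := by
    rw [sq, ← CStarRing.norm_star_mul_self, hssa.star_eq, hss]
  calc ‖a ξ‖ ^ 2 = ‖s (s ξ)‖ ^ 2 := by rw [h1]
    _ ≤ (‖s‖ * ‖s ξ‖) ^ 2 := by
        have := s.le_opNorm (s ξ)
        exact pow_le_pow_left₀ (norm_nonneg _) this 2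
    _ = ‖s‖ ^ 2 * ‖s ξ‖ ^ 2 := by ring
    _ = ‖a‖ * a.reApplyInnerSelf ξ := by rw [h2, h3]

/-- A decreasing sequence of positive operators has a strong limit. -/
lemma exists_strong_limit {x : ℕ → H →L[ℂ] H} (h0 : ∀ n, 0 ≤ x n)
    (hanti : ∀ n, x (n + 1) ≤ x n) :
    ∃ l : H →L[ℂ] H, 0 ≤ l ∧ (∀ n, l ≤ x n) ∧
      ∀ ξ : H, Tendsto (fun n => x n ξ) atTop (𝓝 (l ξ)) := by
  have hmono : Antitone x := antitone_nat_of_succ_le hanti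
  have hnorm : ∀ n, ‖x n‖ ≤ ‖x 0‖ := fun n =>
    CStarAlgebra.norm_le_norm_of_nonneg_of_le (h0 n) (hmono (Nat.zero_le n))
  -- the quadratic forms converge
  have hq : ∀ ξ : H, ∃ L : ℝ, Tendsto (fun n => (x n).reApplyInnerSelf ξ) atTop (𝓝 L) := by
    intro ξ
    have hqa : Antitone fun n => (x n).reApplyInnerSelf ξ := by
      intro m n hmn
      have : 0 ≤ (x m - x n).reApplyInnerSelf ξ :=
        ((ContinuousLinearMap.nonneg_iff_isPositive _).1 (sub_nonneg.2 (hmono hmn))).2 ξ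
      simpa [ContinuousLinearMap.reApplyInnerSelf_apply, ContinuousLinearMap.sub_apply,
        inner_sub_left] using this
    have hqb : BddBelow (Set.range fun n => (x n).reApplyInnerSelf ξ) := by
      refine ⟨0, ?_⟩
      rintro y ⟨n, rfl⟩
      exact ((ContinuousLinearMap.nonneg_iff_isPositive _).1 (h0 n)).2 ξ
    exact ⟨_, tendsto_atTop_ciInf hqa hqb⟩
  -- strong Cauchy
  have hcauchy : ∀ ξ : H, CauchySeq (fun n => x n ξ) := by
    intro ξ
    obtain ⟨L, hL⟩ := hq ξ
    have hLc : CauchySeq (fun n => (x n).reApplyInnerSelf ξ) := hL.cauchySeq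
    rw [Metric.cauchySeq_iff] at hLc ⊢
    intro ε hε
    obtain ⟨N, hN⟩ := hLc ((ε ^ 2) / (2 * ‖x 0‖ + 1)) (by positivity)
    refine ⟨N, fun m hm n hn => ?_⟩
    -- wlog n ≤ m
    wlog hmn : n ≤ m generalizing m n
    · rw [dist_comm]; exact this n hn m hm (le_of_not_ge hmn)
    have hkey : ‖(x n - x m) ξ‖ ^ 2 ≤ ‖x n - x m‖ * (x n - x m).reApplyInnerSelf ξ :=
      norm_apply_sq_le (sub_nonneg.2 (hmono hmn)) ξ
    have hnm : ‖x n - x m‖ ≤ 2 * ‖x 0‖ := by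
      calc ‖x n - x m‖ ≤ ‖x n‖ + ‖x m‖ := norm_sub_le _ _
        _ ≤ 2 * ‖x 0‖ := by have := hnorm n; have := hnorm m; linarith
    have hd : (x n - x m).reApplyInnerSelf ξ
        = (x n).reApplyInnerSelf ξ - (x m).reApplyInnerSelf ξ := by
      simp [ContinuousLinearMap.reApplyInnerSelf_apply, ContinuousLinearMap.sub_apply,
        inner_sub_left]
    have hdist := hN n hn m hm
    rw [Real.dist_eq] at hdist
    have h0' : 0 ≤ (x n - x m).reApplyInnerSelf ξ :=
      ((ContinuousLinearMap.nonneg_iff_isPositive _).1 (sub_nonneg.2 (hmono hmn))).2 ξ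
    have hlt : ‖(x n - x m) ξ‖ ^ 2 < ε ^ 2 := by
      have h2 : (x n - x m).reApplyInnerSelf ξ < (ε ^ 2) / (2 * ‖x 0‖ + 1) := by
        rw [hd]; rw [hd] at h0'
        calc (x n).reApplyInnerSelf ξ - (x m).reApplyInnerSelf ξ
            ≤ |(x n).reApplyInnerSelf ξ - (x m).reApplyInnerSelf ξ| := le_abs_self _
          _ < (ε ^ 2) / (2 * ‖x 0‖ + 1) := hdist
      have hx0 : (0:ℝ) ≤ ‖x 0‖ := norm_nonneg _
      calc ‖(x n - x m) ξ‖ ^ 2 ≤ ‖x n - x m‖ * (x n - x m).reApplyInnerSelf ξ := hkey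
        _ ≤ (2 * ‖x 0‖) * (x n - x m).reApplyInnerSelf ξ := by
            exact mul_le_mul_of_nonneg_right hnm h0'
        _ ≤ (2 * ‖x 0‖ + 1) * (x n - x m).reApplyInnerSelf ξ := by nlinarith
        _ < (2 * ‖x 0‖ + 1) * ((ε ^ 2) / (2 * ‖x 0‖ + 1)) := by
            exact mul_lt_mul_of_pos_left h2 (by positivity)
        _ = ε ^ 2 := by field_simp
    rw [dist_eq_norm]
    have : ‖x m ξ - x n ξ‖ = ‖(x n - x m) ξ‖ := by
      rw [ContinuousLinearMap.sub_apply, norm_sub_rev]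
    rw [this]
    nlinarith [norm_nonneg ((x n - x m) ξ)]
  choose lim hlim using fun ξ => cauchySeq_tendsto_of_complete (hcauchy ξ)
  -- build the linear map
  have hadd : ∀ ξ η, lim (ξ + η) = lim ξ + lim η := by
    intro ξ η
    refine tendsto_nhds_unique ?_ ((hlim ξ).add (hlim η))
    simpa [ContinuousLinearMap.map_add] using hlim (ξ + η)
  have hsmul : ∀ (c : ℂ) ξ, lim (c • ξ) = c • lim ξ := by
    intro c ξ
    refine tendsto_nhds_unique ?_ ((hlim ξ).const_smul c)
    simpa [ContinuousLinearMap.map_smul] using hlim (c • ξ)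
  have hbound : ∀ ξ, ‖lim ξ‖ ≤ ‖x 0‖ * ‖ξ‖ := by
    intro ξ
    refine le_of_tendsto ((hlim ξ).norm) (Eventually.of_forall fun n => ?_)
    calc ‖x n ξ‖ ≤ ‖x n‖ * ‖ξ‖ := (x n).le_opNorm ξ
      _ ≤ ‖x 0‖ * ‖ξ‖ := mul_le_mul_of_nonneg_right (hnorm n) (norm_nonneg _)
  let l : H →L[ℂ] H := LinearMap.mkContinuous
    { toFun := lim, map_add' := hadd, map_smul' := hsmul } ‖x 0‖ hbound
  have hlapp : ∀ ξ, l ξ = lim ξ := fun _ => rfl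
  have hsym : ∀ n : ℕ, ∀ ξ η : H, ⟪x n ξ, η⟫_ℂ = ⟪ξ, x n η⟫_ℂ := by
    intro n ξ η
    have hsa : IsSelfAdjoint (x n) := IsSelfAdjoint.of_nonneg (h0 n)
    rw [← ContinuousLinearMap.adjoint_inner_left]
    congr 1
    exact (congrFun (congrArg _ hsa.adjoint_eq) ξ).symm
  have hlsym : IsSelfAdjoint l := by
    rw [ContinuousLinearMap.isSelfAdjoint_iff_isSymmetric]
    intro ξ η
    refine tendsto_nhds_unique (f := fun n => ⟪x n ξ, η⟫_ℂ) (l := atTop) ?_ ?_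
    · exact Tendsto.inner (by simpa [hlapp] using hlim ξ) tendsto_const_nhds
    · have : (fun n => ⟪x n ξ, η⟫_ℂ) = fun n => ⟪ξ, x n η⟫_ℂ := funext fun n => hsym n ξ η
      rw [this]
      exact Tendsto.inner tendsto_const_nhds (by simpa [hlapp] using hlim η)
  refine ⟨l, ?_, ?_, fun ξ => by simpa [hlapp] using hlim ξ⟩
  · rw [ContinuousLinearMap.nonneg_iff_isPositive]
    refine ⟨hlsym.isSymmetric, fun ξ => ?_⟩
    show (0:ℝ) ≤ (⟪l ξ, ξ⟫_ℂ).re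
    have h1 : Tendsto (fun n => ((⟪x n ξ, ξ⟫_ℂ) : ℂ).re) atTop (𝓝 ((⟪l ξ, ξ⟫_ℂ).re)) :=
      (Complex.continuous_re.tendsto _).comp
        (Tendsto.inner (by simpa [hlapp] using hlim ξ) tendsto_const_nhds)
    refine le_of_tendsto_of_tendsto tendsto_const_nhds h1 (Eventually.of_forall fun n => ?_)
    exact ((ContinuousLinearMap.nonneg_iff_isPositive _).1 (h0 n)).2 ξ
  · intro n
    rw [← sub_nonneg, ContinuousLinearMap.nonneg_iff_isPositive]
    refine ⟨((IsSelfAdjoint.of_nonneg (h0 n)).sub hlsym).isSymmetric, fun ξ => ?_⟩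
    have hre : (x n - l).reApplyInnerSelf ξ = (⟪x n ξ, ξ⟫_ℂ).re - (⟪l ξ, ξ⟫_ℂ).re := by
      simp [ContinuousLinearMap.reApplyInnerSelf_apply, ContinuousLinearMap.sub_apply,
        inner_sub_left]
    rw [hre]
    have h1 : Tendsto (fun m => ((⟪x m ξ, ξ⟫_ℂ) : ℂ).re) atTop (𝓝 ((⟪l ξ, ξ⟫_ℂ).re)) :=
      (Complex.continuous_re.tendsto _).comp
        (Tendsto.inner (by simpa [hlapp] using hlim ξ) tendsto_const_nhds)
    have h2 : ∀ m, n ≤ m → (⟪x m ξ, ξ⟫_ℂ).re ≤ (⟪x n ξ, ξ⟫_ℂ).re := by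
      intro m hm
      have : 0 ≤ (x n - x m).reApplyInnerSelf ξ :=
        ((ContinuousLinearMap.nonneg_iff_isPositive _).1 (sub_nonneg.2 (hmono hm))).2 ξ
      simp only [ContinuousLinearMap.reApplyInnerSelf_apply, ContinuousLinearMap.sub_apply,
        inner_sub_left, map_sub, RCLike.re_to_complex] at this
      linarith
    have := le_of_tendsto h1 (eventually_atTop.2 ⟨n, h2⟩)
    linarith



namespace IsRealVNA
variable {R : Set (H →L[ℂ] H)} (hR : IsRealVNA R)
include hR

lemma mem_of_tendsto {x : ℕ → H →L[ℂ] H} (hx : ∀ n, x n ∈ R) {a : H →L[ℂ] H}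
    (h : ∀ ξ : H, Tendsto (fun n => x n ξ) atTop (𝓝 (a ξ))) : a ∈ R := by
  have hwot : Tendsto (fun n => (ContinuousLinearMapWOT.ofCLM : (H →L[ℂ] H) → (H →WOT[ℂ] H)) (x n)) atTop
      (𝓝 ((ContinuousLinearMapWOT.ofCLM : (H →L[ℂ] H) → (H →WOT[ℂ] H)) a)) := by
    rw [ContinuousLinearMapWOT.tendsto_iff_forall_inner_apply_tendsto]
    intro ξ y
    exact Tendsto.inner tendsto_const_nhds (h ξ)
  have hmem : (ContinuousLinearMapWOT.ofCLM : (H →L[ℂ] H) → (H →WOT[ℂ] H)) a ∈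
      (ContinuousLinearMapWOT.ofCLM : (H →L[ℂ] H) → (H →WOT[ℂ] H)) '' R :=
    hR.wclosed.mem_of_tendsto hwot (Eventually.of_forall fun n => ⟨x n, hx n, rfl⟩)
  obtain ⟨c, hc, hceq⟩ := hmem
  rwa [← ContinuousLinearMapWOT.ofCLM_injective hceq]

lemma pow_mem {a : H →L[ℂ] H} (ha : a ∈ R) : ∀ n : ℕ, a ^ (n + 1) ∈ R := by
  intro n
  induction n with
  | zero => simpa using ha
  | succ k ih => rw [pow_succ]; exact hR.mul_mem ih ha

lemma aeval_mem {a : H →L[ℂ] H} (ha : a ∈ R) (p : Polynomial ℝ) :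
    Polynomial.aeval a p ∈ R := by
  induction p using Polynomial.induction_on' with
  | add f g hf hg => rw [map_add]; exact hR.add_mem hf hg
  | monomial n c =>
    rw [Polynomial.aeval_monomial, ← Algebra.smul_def]
    rcases n with - | k
    · simpa using hR.smul_mem c hR.one_mem
    · exact hR.smul_mem c (hR.pow_mem ha k)

lemma mem_of_norm_tendsto {x : ℕ → H →L[ℂ] H} (hx : ∀ n, x n ∈ R) {a : H →L[ℂ] H}
    (h : Tendsto (fun n => ‖x n - a‖) atTop (𝓝 0)) : a ∈ R := by
  refine hR.mem_of_tendsto hx fun ξ => ?_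
  rw [tendsto_iff_norm_sub_tendsto_zero]
  refine squeeze_zero (fun n => norm_nonneg _) (fun n => ?_)
    (by simpa using h.mul_const ‖ξ‖)
  have : x n ξ - a ξ = (x n - a) ξ := by simp
  rw [this]
  exact (x n - a).le_opNorm ξ

lemma cfc_mem [Nontrivial H] {a : H →L[ℂ] H} (ha : a ∈ R) (hsa : IsSelfAdjoint a)
    {f : ℝ → ℝ} (hf : Continuous f) : cfc f a ∈ R := by
  have hspec : spectrum ℝ a ⊆ Set.Icc (-‖a‖) ‖a‖ := by
    intro s hs
    have := spectrum.norm_le_norm_of_mem hs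
    rw [Real.norm_eq_abs] at this
    constructor <;> [linarith [neg_abs_le s]; linarith [le_abs_self s]]
  -- polynomial approximations
  have happrox : ∀ n : ℕ, ∃ p : Polynomial ℝ,
      ∀ s ∈ Set.Icc (-‖a‖) ‖a‖, |f s - p.eval s| ≤ 1 / (n + 1) := by
    intro n
    set I : Set ℝ := Set.Icc (-‖a‖) ‖a‖
    have hI : CompactSpace I := by
      rw [← isCompact_iff_compactSpace]; exact isCompact_Icc
    set fI : C(I, ℝ) := ⟨fun s => f s, hf.comp continuous_subtype_val⟩
    have hdense := polynomialFunctions_closure_eq_top (-‖a‖) ‖a‖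
    have hmem : fI ∈ (polynomialFunctions I).topologicalClosure := by
      rw [hdense]; trivial
    rw [← SetLike.mem_coe, Subalgebra.topologicalClosure_coe] at hmem
    have := Metric.mem_closure_iff.1 hmem (1 / (n + 1)) (by positivity)
    obtain ⟨g, hg, hdist⟩ := this
    obtain ⟨p, hp⟩ : ∃ p : Polynomial ℝ, p.toContinuousMapOn I = g := by
      have : g ∈ (polynomialFunctions I : Set C(I, ℝ)) := hg
      rw [polynomialFunctions_coe] at this
      obtain ⟨q, hq⟩ := this
      exact ⟨q, hq⟩
    refine ⟨p, fun s hs => ?_⟩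
    have := ContinuousMap.dist_apply_le_dist (f := fI) (g := g) ⟨s, hs⟩
    rw [← hp] at this
    have h2 : dist (fI ⟨s, hs⟩) ((p.toContinuousMapOn I) ⟨s, hs⟩) ≤ dist fI g := by
      rw [hp]; exact ContinuousMap.dist_apply_le_dist _
    rw [Real.dist_eq] at h2
    have : |f s - p.eval s| ≤ dist fI g := by
      simpa [fI, Polynomial.toContinuousMapOn, Polynomial.toContinuousMap] using h2
    linarith [le_of_lt hdist]
  choose p hp using happrox
  refine hR.mem_of_norm_tendsto (x := fun n => Polynomial.aeval a (p n))
    (fun n => hR.aeval_mem ha (p n)) ?_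
  have hbound : ∀ n : ℕ, ‖Polynomial.aeval a (p n) - cfc f a‖ ≤ 1 / (n + 1) := by
    intro n
    rw [← cfc_polynomial (q := p n) (a := a) hsa,
      ← cfc_sub (a := a) (f := fun s : ℝ => Polynomial.eval s (p n)) (g := f)
        ((p n).continuous).continuousOn hf.continuousOn]
    refine norm_cfc_le (by positivity) fun s hs => ?_
    rw [Real.norm_eq_abs, abs_sub_comm]
    exact hp n s (hspec hs)
  refine squeeze_zero (fun n => norm_nonneg _) hbound ?_
  exact tendsto_one_div_add_atTop_nhds_zero_nat

end IsRealVNA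


/-- the weights -/
lemma weight_facts {E : ℕ → ℝ} (hsum : Summable E) (hE : ∀ m, 0 ≤ E m) :
    ∃ u : ℕ → ℝ, (∀ m, 1 ≤ u m) ∧ Tendsto u atTop atTop ∧
      ∀ m, ∑ k ∈ range m, u k * E k ≤ (∑' k, E k) + Real.sqrt (∑' k, E k) := by
  set r : ℕ → ℝ := fun m => ∑' i, E (i + m) with hr
  have hrsummable : ∀ m, Summable fun i => E (i + m) := fun m =>
    (summable_nat_add_iff m).2 hsum
  have hr0 : ∀ m, 0 ≤ r m := fun m => tsum_nonneg fun i => hE _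
  have hrrec : ∀ m, r m = E m + r (m + 1) := by
    intro m
    have h0 := (hrsummable m).tsum_eq_zero_add
    simp only [zero_add] at h0
    rw [hr]
    simp only
    rw [h0]
    congr 1
    apply tsum_congr
    intro i
    congr 1
    omega
  have hrtend : Tendsto r atTop (𝓝 0) := by
    have := tendsto_sum_nat_add E
    simpa [hr] using this
  set d : ℕ → ℝ := fun m => Real.sqrt (r m) + Real.sqrt (r (m + 1)) + (1/2 : ℝ) ^ m with hd
  have hd0 : ∀ m, 0 < d m := by
    intro m
    have : (0:ℝ) < (1/2 : ℝ) ^ m := by positivity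
    have := Real.sqrt_nonneg (r m)
    have := Real.sqrt_nonneg (r (m + 1))
    simp only [hd]
    positivity
  refine ⟨fun m => 1 + (d m)⁻¹, fun m => le_add_of_nonneg_right (by positivity), ?_, ?_⟩
  · have hdt : Tendsto d atTop (𝓝[>] 0) := by
      refine tendsto_nhdsWithin_of_tendsto_nhds_of_eventually_within _ ?_
        (Eventually.of_forall fun m => hd0 m)
      have h1 : Tendsto (fun m => Real.sqrt (r m)) atTop (𝓝 0) := by
        have := (Real.continuous_sqrt.tendsto 0).comp hrtend
        simpa [Function.comp_def] using this
      have h2 : Tendsto (fun m => Real.sqrt (r (m + 1))) atTop (𝓝 0) :=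
        h1.comp (tendsto_add_atTop_nat 1)
      have h3 : Tendsto (fun m => ((1:ℝ)/2) ^ m) atTop (𝓝 0) := by
        apply tendsto_pow_atTop_nhds_zero_of_lt_one <;> norm_num
      have := (h1.add h2).add h3
      simpa [hd] using this
    have := hdt.inv_tendsto_nhdsGT_zero
    exact tendsto_atTop_add_const_left _ 1 this
  · intro m
    have hterm : ∀ k, (1 + (d k)⁻¹) * E k ≤ E k + (Real.sqrt (r k) - Real.sqrt (r (k+1))) := by
      intro k
      have hEk : E k = r k - r (k + 1) := by have := hrrec k; linarith
      have hmono : Real.sqrt (r (k+1)) ≤ Real.sqrt (r k) :=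
        Real.sqrt_le_sqrt (by have := hrrec k; have := hE k; linarith)
      have hdk := hd0 k
      have hdiv : (d k)⁻¹ * E k ≤ Real.sqrt (r k) - Real.sqrt (r (k+1)) := by
        rw [inv_mul_le_iff₀ hdk, mul_comm]
        have hsq1 : Real.sqrt (r k) ^ 2 = r k := Real.sq_sqrt (hr0 k)
        have hsq2 : Real.sqrt (r (k+1)) ^ 2 = r (k+1) := Real.sq_sqrt (hr0 (k+1))
        have hdge : Real.sqrt (r k) + Real.sqrt (r (k+1)) ≤ d k := by
          simp only [hd]
          have : (0:ℝ) < (1/2 : ℝ) ^ k := by positivity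
          linarith
        have hs0 : 0 ≤ Real.sqrt (r k) - Real.sqrt (r (k+1)) := by linarith
        calc E k = r k - r (k+1) := hEk
          _ = (Real.sqrt (r k) - Real.sqrt (r (k+1))) *
              (Real.sqrt (r k) + Real.sqrt (r (k+1))) := by nlinarith
          _ ≤ (Real.sqrt (r k) - Real.sqrt (r (k+1))) * d k :=
              mul_le_mul_of_nonneg_left hdge hs0
      nlinarith
    calc ∑ k ∈ range m, (1 + (d k)⁻¹) * E k
        ≤ ∑ k ∈ range m, (E k + (Real.sqrt (r k) - Real.sqrt (r (k+1)))) :=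
          Finset.sum_le_sum fun k _ => hterm k
      _ = (∑ k ∈ range m, E k) + ∑ k ∈ range m, (Real.sqrt (r k) - Real.sqrt (r (k+1))) :=
          Finset.sum_add_distrib
      _ ≤ (∑' k, E k) + Real.sqrt (∑' k, E k) := by
          have h1 : ∑ k ∈ range m, E k ≤ ∑' k, E k :=
            hsum.sum_le_tsum (range m) (fun i _ => hE i)
          have h2 : ∑ k ∈ range m, (Real.sqrt (r k) - Real.sqrt (r (k+1)))
              = Real.sqrt (r 0) - Real.sqrt (r m) :=
            Finset.sum_range_sub' (fun k => Real.sqrt (r k)) m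
          have h3 : r 0 = ∑' k, E k := by simp [hr]
          have h4 : 0 ≤ Real.sqrt (r m) := Real.sqrt_nonneg _
          rw [h2, h3]
          linarith


lemma opLE_iff (a b : H →L[ℂ] H) : OpLE a b ↔ a ≤ b := (ContinuousLinearMap.le_def a b).symm

lemma smul_op_nonneg {a : H →L[ℂ] H} (ha : 0 ≤ a) {c : ℝ} (hc : 0 ≤ c) : 0 ≤ c • a := by
  obtain ⟨s, hs⟩ : ∃ s : H →L[ℂ] H, star s * s = a :=
    ⟨CFC.sqrt a, by rw [(IsSelfAdjoint.of_nonneg (CFC.sqrt_nonneg a)).star_eq,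
      CFC.sqrt_mul_sqrt_self a ha]⟩
  have : c • a = star (Real.sqrt c • s) * (Real.sqrt c • s) := by
    rw [star_smul, star_trivial, smul_mul_smul_comm, Real.mul_self_sqrt hc, hs]
  rw [this]
  exact star_mul_self_nonneg _

lemma smul_op_mono {a b : H →L[ℂ] H} (hab : a ≤ b) {c : ℝ} (hc : 0 ≤ c) : c • a ≤ c • b := by
  have := smul_op_nonneg (sub_nonneg.2 hab) hc
  rw [smul_sub] at this
  exact sub_nonneg.1 this

theorem main_core {R : Set (H →L[ℂ] H)} (hR : IsRealVNA R)
    (ρ : (H →L[ℂ] H) →ₗ[ℝ] ℝ) (hρ : IsFNState (saPart R) ρ)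
    (D : ℕ → H →L[ℂ] H) (hD : ∀ m, D m ∈ saPart R ∧ (D m).IsPositive)
    (hsum : Summable fun m => ρ (D m)) :
    ∀ ε > (0 : ℝ), ∃ p : H →L[ℂ] H, InBundle (saPart R) D p ∧ ρ (1 - p) < 2 * ε := by
  -- nontriviality
  have hnt : Nontrivial H := by
    by_contra hcon
    have hsub : Subsingleton H := not_nontrivial_iff_subsingleton.mp hcon
    have h10 : (1 : H →L[ℂ] H) = 0 := ContinuousLinearMap.ext fun ξ => Subsingleton.elim _ _
    have h1 := hρ.one
    rw [h10, map_zero] at h1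
    exact one_ne_zero h1.symm
  haveI := hnt
  -- basic facts about D
  have hDpos : ∀ m, 0 ≤ D m := fun m =>
    (ContinuousLinearMap.nonneg_iff_isPositive _).2 (hD m).2
  have hDR : ∀ m, D m ∈ R := fun m => (hD m).1.1
  have hρmono : ∀ {a b : H →L[ℂ] H}, a ≤ b → ρ a ≤ ρ b := by
    intro a b hab
    have := hρ.pos (b - a) ((ContinuousLinearMap.le_def a b).1 hab)
    rw [map_sub] at this
    linarith
  set E : ℕ → ℝ := fun m => ρ (D m) with hE_def
  have hE : ∀ m, 0 ≤ E m := fun m => hρ.pos (D m) (hD m).2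
  obtain ⟨u, hu1, hutop, husum⟩ := weight_facts hsum hE
  set C' : ℝ := (∑' k, E k) + Real.sqrt (∑' k, E k) with hC'def
  have hC'0 : 0 ≤ C' := by
    have : 0 ≤ ∑' k, E k := tsum_nonneg hE
    have := Real.sqrt_nonneg (∑' k, E k)
    positivity
  intro ε hε
  set ε' : ℝ := min ε 2⁻¹ with hε'def
  have hε'0 : 0 < ε' := lt_min hε (by norm_num)
  set t : ℝ := ε' / (2 * C' + 1) with ht_def
  have ht0 : 0 < t := by positivity
  -- the operators
  set Z : ℕ → H →L[ℂ] H := fun m => ∑ k ∈ range m, u k • D k with hZdef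
  set W : ℕ → H →L[ℂ] H := fun m => t • Z m with hWdef
  set Y : ℕ → H →L[ℂ] H := fun m => 1 + W m with hYdef
  have hZR : ∀ m, Z m ∈ R := by
    intro m
    induction m with
    | zero => simpa [hZdef] using hR.zero_mem
    | succ k ih =>
      have : Z (k + 1) = Z k + u k • D k := by rw [hZdef]; exact Finset.sum_range_succ _ k
      rw [this]
      exact hR.add_mem ih (hR.smul_mem _ (hDR k))
  have hZ0 : ∀ m, 0 ≤ Z m := fun m =>
    Finset.sum_nonneg fun k _ => smul_op_nonneg (hDpos k) (by linarith [hu1 k])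
  have hZsa : ∀ m, IsSelfAdjoint (Z m) := fun m => IsSelfAdjoint.of_nonneg (hZ0 m)
  have hZmono : ∀ m, Z m ≤ Z (m + 1) := by
    intro m
    have h1 : Z (m + 1) = Z m + u m • D m := by rw [hZdef]; exact Finset.sum_range_succ _ m
    rw [h1]
    exact le_add_of_nonneg_right (smul_op_nonneg (hDpos m) (by linarith [hu1 m]))
  have hρZ : ∀ m, ρ (Z m) ≤ C' := by
    intro m
    have : ρ (Z m) = ∑ k ∈ range m, u k * E k := by
      rw [hZdef]; rw [map_sum]
      exact Finset.sum_congr rfl fun k _ => by rw [map_smul]; rfl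
    rw [this]
    exact husum m
  have hW0 : ∀ m, 0 ≤ W m := fun m => smul_op_nonneg (hZ0 m) ht0.le
  have hWR : ∀ m, W m ∈ R := fun m => hR.smul_mem _ (hZR m)
  have hWsa : ∀ m, IsSelfAdjoint (W m) := fun m => IsSelfAdjoint.of_nonneg (hW0 m)
  have hWmono : ∀ m, W m ≤ W (m + 1) := fun m => smul_op_mono (hZmono m) ht0.le
  have hWspec : ∀ m, ∀ s ∈ spectrum ℝ (W m), 0 ≤ s := fun m =>
    spectrum_nonneg_of_nonneg (hW0 m)
  have hY1 : ∀ m, 1 ≤ Y m := fun m => le_add_of_nonneg_right (hW0 m)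
  have hY0 : ∀ m, 0 ≤ Y m := fun m => zero_le_one.trans (hY1 m)
  have hYsa : ∀ m, IsSelfAdjoint (Y m) := fun m => IsSelfAdjoint.of_nonneg (hY0 m)
  -- the resolvent sequence
  set invf : ℝ → ℝ := fun s => (1 + max s 0)⁻¹ with hinvf_def
  have hinvf_pos : ∀ s : ℝ, 0 < 1 + max s 0 := by
    intro s
    have := le_max_right s 0
    linarith
  have hinvf_cont : Continuous invf := by
    apply Continuous.inv₀
    · exact continuous_const.add (continuous_id.max continuous_const)
    · exact fun s => (hinvf_pos s).ne'
  set bs : ℕ → H →L[ℂ] H := fun m => cfc invf (W m) with hbs_def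
  have hbsR : ∀ m, bs m ∈ R := fun m => hR.cfc_mem (hWR m) (hWsa m) hinvf_cont
  have hbs0 : ∀ m, 0 ≤ bs m := fun m => cfc_nonneg fun s _ => by positivity
  have hbs1 : ∀ m, bs m ≤ 1 := by
    intro m
    have := cfc_le_algebraMap invf 1 (W m) (fun s hs => by
      rw [hinvf_def]
      try simp only
      rw [inv_le_one_iff₀]
      right
      have := le_max_right s 0
      linarith) hinvf_cont.continuousOn (hWsa m)
    rwa [map_one] at this
  -- inverse identities
  have hbsY : ∀ m, bs m * Y m = 1 ∧ Y m * bs m = 1 := by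
    intro m
    have hYcfc : Y m = cfc (fun s : ℝ => 1 + s) (W m) := by
      have h := cfc_const_add (R := ℝ) 1 (id : ℝ → ℝ) (W m) continuousOn_id (hWsa m)
      rw [cfc_id ℝ (W m) (hWsa m), map_one] at h
      exact h.symm
    constructor
    · rw [hYcfc, hbs_def]
      rw [← cfc_mul invf (fun s : ℝ => 1 + s) (W m) hinvf_cont.continuousOn
        (by fun_prop)]
      rw [← cfc_one (R := ℝ) (W m) (hWsa m)]
      apply cfc_congr
      intro s hs
      have hs0 := hWspec m s hs
      have h1s : (0:ℝ) < 1 + s := by linarith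
      simp only [hinvf_def]
      rw [max_eq_left hs0]
      field_simp
      rfl
    · rw [hYcfc, hbs_def]
      rw [← cfc_mul (fun s : ℝ => 1 + s) invf (W m) (by fun_prop)
        hinvf_cont.continuousOn]
      rw [← cfc_one (R := ℝ) (W m) (hWsa m)]
      apply cfc_congr
      intro s hs
      have hs0 := hWspec m s hs
      have h1s : (0:ℝ) < 1 + s := by linarith
      simp only [hinvf_def]
      rw [max_eq_left hs0]
      field_simp
      rfl
  -- antitone
  have hbs_anti : ∀ m, bs (m + 1) ≤ bs m := by
    intro m
    set Um : (H →L[ℂ] H)ˣ := ⟨Y m, bs m, (hbsY m).2, (hbsY m).1⟩ with hUm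
    set Um1 : (H →L[ℂ] H)ˣ := ⟨Y (m+1), bs (m+1), (hbsY (m+1)).2, (hbsY (m+1)).1⟩
    have hYm : (Um : H →L[ℂ] H) ≤ (Um1 : H →L[ℂ] H) := by
      show Y m ≤ Y (m + 1)
      rw [hYdef]
      try simp only
      exact add_le_add (le_refl 1) (hWmono m)
    have := CStarAlgebra.inv_le_inv (a := Um) (b := Um1) (hY0 m) hYm
    exact this
  have h1bs : ∀ m, 1 - bs m ≤ W m := by
    intro m
    have e1 : 1 - bs m = cfc (fun s : ℝ => 1 - invf s) (W m) := by
      rw [cfc_sub (fun _ : ℝ => 1) invf (W m) (by fun_prop) hinvf_cont.continuousOn]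
      rw [cfc_const_one ℝ (W m) (hWsa m)]
    have e2 : cfc (fun s : ℝ => 1 - invf s) (W m) ≤ cfc (id : ℝ → ℝ) (W m) := by
      refine cfc_mono (fun s hs => ?_) ((continuous_const.sub hinvf_cont).continuousOn)
        continuousOn_id
      have hs0 := hWspec m s hs
      have h1s : (0:ℝ) < 1 + s := by linarith
      simp only [hinvf_def, id_eq]
      rw [max_eq_left hs0]
      rw [sub_le_iff_le_add]
      have hinv : (1 + s) * (1 + s)⁻¹ = 1 := mul_inv_cancel₀ h1s.ne'
      have hinvpos : (0:ℝ) < (1 + s)⁻¹ := by positivity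
      nlinarith [mul_nonneg hs0 hinvpos.le, mul_nonneg hs0 hs0]
    rw [e1]
    calc cfc (fun s : ℝ => 1 - invf s) (W m) ≤ cfc (id : ℝ → ℝ) (W m) := e2
      _ = W m := cfc_id ℝ (W m) (hWsa m)
  -- strong limit b
  obtain ⟨b, hb0, hble, hbtend⟩ := exists_strong_limit hbs0 hbs_anti
  have hbR : b ∈ R := hR.mem_of_tendsto hbsR hbtend
  have hbsa : IsSelfAdjoint b := IsSelfAdjoint.of_nonneg hb0
  have hbub : b ≤ 1 := (hble 0).trans (hbs1 0)
  have hbspec : ∀ s ∈ spectrum ℝ b, 0 ≤ s ∧ s ≤ 1 := by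
    intro s hs
    refine ⟨spectrum_nonneg_of_nonneg hb0 hs, ?_⟩
    have h1 : ‖b‖ ≤ 1 := (CStarAlgebra.norm_le_one_iff_of_nonneg b hb0).2 hbub
    have h2 := spectrum.norm_le_norm_of_mem hs
    rw [Real.norm_eq_abs] at h2
    have := le_abs_self s
    linarith
  -- ρ(1 - b) ≤ t * C'
  have hρ1b : ρ (1 - b) ≤ t * C' := by
    have hnormal := hρ.normal (fun m => 1 - bs m) (1 - b)
      (fun m => (opLE_iff _ _).2 (by
        have := hbs_anti m
        try simp only
        exact sub_le_sub_left this 1))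
      (fun m => (opLE_iff _ _).2 (by
        have := hble m
        try simp only
        exact sub_le_sub_left this 1))
      (fun ξ => by
        simp only [ContinuousLinearMap.sub_apply, ContinuousLinearMap.one_apply]
        exact tendsto_const_nhds.sub (hbtend ξ))
    refine le_of_tendsto hnormal (Eventually.of_forall fun m => ?_)
    calc ρ (1 - bs m) ≤ ρ (W m) := hρmono (h1bs m)
      _ = t * ρ (Z m) := by rw [hWdef]; simp only; rw [map_smul]; rfl
      _ ≤ t * C' := by have := hρZ m; nlinarith
  -- the function g and G
  set g : ℝ → ℝ := fun s => min 1 (max 0 (6 * s - 2)) with hgdef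
  have hgcont : Continuous g := by fun_prop
  have hg0 : ∀ s, 0 ≤ g s := fun s => le_min (by norm_num) (le_max_left 0 _) |>.trans_eq rfl
  have hg1 : ∀ s, g s ≤ 1 := fun s => min_le_left _ _
  have hgsmall : ∀ s : ℝ, s ≤ 3⁻¹ → g s = 0 := by
    intro s hs
    rw [hgdef]
    try simp only
    rw [max_eq_left (by linarith), min_eq_right (by norm_num)]
  have hgbig : ∀ s : ℝ, (2:ℝ)⁻¹ ≤ s → g s = 1 := by
    intro s hs
    rw [hgdef]
    try simp only
    rw [max_eq_right (by linarith), min_eq_left (by linarith)]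
  set G : H →L[ℂ] H := cfc g b with hGdef
  have hGR : G ∈ R := hR.cfc_mem hbR hbsa hgcont
  have hG0 : 0 ≤ G := cfc_nonneg fun s _ => hg0 s
  have hGle1 : G ≤ 1 := by
    have := cfc_le_algebraMap g 1 b (fun s _ => hg1 s) hgcont.continuousOn hbsa
    rwa [map_one] at this
  have hGsa : IsSelfAdjoint G := cfc_predicate g b
  have hGpow_anti : Antitone (G ^ · : ℕ → H →L[ℂ] H) := CStarAlgebra.pow_antitone hG0 hGle1
  have hGpow0 : ∀ n, 0 ≤ G ^ n := fun n => CStarAlgebra.pow_nonneg hG0 n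
  have hGpow1 : ∀ n, G ^ n ≤ 1 := fun n => by
    have := hGpow_anti (Nat.zero_le n)
    simpa using this
  have hGpowR : ∀ n : ℕ, G ^ n ∈ R := by
    intro n
    induction n with
    | zero => simpa using hR.one_mem
    | succ k ih => rw [pow_succ]; exact hR.mul_mem ih hGR
  have hGnorm : ∀ n, ‖G ^ n‖ ≤ 1 := fun n =>
    (CStarAlgebra.norm_le_one_iff_of_nonneg _ (hGpow0 n)).2 (hGpow1 n)
  -- strong limit e
  obtain ⟨e, he0, hele, hetend⟩ := exists_strong_limit hGpow0
    (fun n => hGpow_anti (Nat.le_succ n))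
  have heR : e ∈ R := hR.mem_of_tendsto hGpowR hetend
  have hesa : IsSelfAdjoint e := IsSelfAdjoint.of_nonneg he0
  have he1 : e ≤ 1 := (hele 0).trans (by simpa using le_refl (1 : H →L[ℂ] H))
  -- G * e = e
  have hGe : G * e = e := by
    refine ContinuousLinearMap.ext fun ξ => ?_
    have t1 : Tendsto (fun n => G ((G ^ n) ξ)) atTop (𝓝 (G (e ξ))) :=
      (G.continuous.tendsto _).comp (hetend ξ)
    have t2 : Tendsto (fun n => G ((G ^ n) ξ)) atTop (𝓝 (e ξ)) := by
      have heq : (fun n => G ((G ^ n) ξ)) = fun n => (G ^ (n + 1)) ξ := by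
        funext n
        rw [pow_succ']
        rfl
      rw [heq]
      exact (hetend ξ).comp (tendsto_add_atTop_nat 1)
    have := tendsto_nhds_unique t1 t2
    simpa using this
  have heG : e * G = e := by
    have := congrArg star hGe
    rwa [star_mul, hesa.star_eq, hGsa.star_eq] at this
  -- e is idempotent
  have hee : e * e = e := by
    refine ContinuousLinearMap.ext fun ξ => ?_
    have t1 : Tendsto (fun n => (G ^ n) (e ξ)) atTop (𝓝 (e (e ξ))) := hetend (e ξ)
    have t2 : Tendsto (fun n => (G ^ n) (e ξ)) atTop (𝓝 (e ξ)) := by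
      rw [tendsto_iff_norm_sub_tendsto_zero]
      have hbound : ∀ n, ‖(G ^ n) (e ξ) - e ξ‖ ≤
          ‖e ξ - (G ^ n) ξ‖ + ‖(G ^ (2 * n)) ξ - e ξ‖ := by
        intro n
        have hsplit : (G ^ n) (e ξ) - e ξ =
            (G ^ n) (e ξ - (G ^ n) ξ) + ((G ^ (2*n)) ξ - e ξ) := by
          have h2n : (G ^ n) ((G ^ n) ξ) = (G ^ (2*n)) ξ := by
            rw [two_mul, pow_add]
            rfl
          rw [map_sub, h2n]
          abel
        rw [hsplit]
        refine (norm_add_le _ _).trans ?_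
        gcongr
        calc ‖(G ^ n) (e ξ - (G ^ n) ξ)‖ ≤ ‖G ^ n‖ * ‖e ξ - (G ^ n) ξ‖ :=
            (G ^ n).le_opNorm _
          _ ≤ 1 * ‖e ξ - (G ^ n) ξ‖ := by
            have := hGnorm n
            have := norm_nonneg (e ξ - (G ^ n) ξ)
            nlinarith
          _ = ‖e ξ - (G ^ n) ξ‖ := one_mul _
      refine squeeze_zero (fun n => norm_nonneg _) hbound ?_
      have l1 : Tendsto (fun n => ‖e ξ - (G ^ n) ξ‖) atTop (𝓝 0) := by
        have := (hetend ξ).const_sub (e ξ)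
        rw [show e ξ - e ξ = 0 by simp] at this
        exact this.norm.congr (fun n => rfl) |>.mono_right (by simp [norm_zero]) |>.congr'
          (by rfl)
      have l2 : Tendsto (fun n => ‖(G ^ (2*n)) ξ - e ξ‖) atTop (𝓝 0) := by
        have h2 : Tendsto (fun n : ℕ => 2 * n) atTop atTop :=
          tendsto_atTop_atTop_of_monotone (fun a b h => by omega) (fun c => ⟨c, by omega⟩)
        have := (hetend ξ).comp h2
        rw [tendsto_iff_norm_sub_tendsto_zero] at this
        exact this
      have := l1.add l2
      simpa using this
    have := tendsto_nhds_unique t1 t2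
    show (e * e) ξ = e ξ
    rw [ContinuousLinearMap.mul_apply]
    exact this
  -- ρ(1 - e) ≤ 2 ρ(1 - b)
  have hρ1e : ρ (1 - e) ≤ 2 * ρ (1 - b) := by
    have hkey : ∀ n : ℕ, (1 : H →L[ℂ] H) - G ^ n ≤ (2:ℝ) • (1 - b) := by
      intro n
      have e1 : (1 : H →L[ℂ] H) - G ^ n = cfc (fun s => 1 - g s ^ n) b := by
        rw [cfc_sub (fun _ : ℝ => 1) (fun s => g s ^ n) b continuousOn_const
          ((hgcont.pow n).continuousOn)]
        rw [cfc_const_one ℝ b hbsa, cfc_pow g n b hgcont.continuousOn hbsa]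
      have e2 : (2:ℝ) • ((1:H →L[ℂ] H) - b) = cfc (fun s : ℝ => 2 * (1 - s)) b := by
        have h1 : cfc (fun s : ℝ => 2 * (1 - s)) b = (2:ℝ) • cfc (fun s : ℝ => 1 - s) b := by
          rw [← cfc_smul (2:ℝ) (fun s : ℝ => 1 - s) b (by fun_prop)]
          apply cfc_congr
          intro s _
          simp [smul_eq_mul]
        have h2 : cfc (fun s : ℝ => 1 - s) b = 1 - b := by
          have h := cfc_sub (fun _ : ℝ => 1) (id : ℝ → ℝ) b continuousOn_const continuousOn_id
          rw [cfc_const_one ℝ b hbsa, cfc_id ℝ b hbsa] at h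
          exact h
        rw [h1, h2]
      rw [e1, e2]
      refine cfc_mono (fun s hs => ?_) ((continuous_const.sub (hgcont.pow n)).continuousOn)
        (by fun_prop)
      obtain ⟨hs0, hs1⟩ := hbspec s hs
      by_cases hc : (2:ℝ)⁻¹ ≤ s
      · rw [hgbig s hc, one_pow]
        nlinarith
      · push_neg at hc
        have : g s ^ n ≥ 0 := pow_nonneg (hg0 s) n
        nlinarith
    have hnormal := hρ.normal (fun n => 1 - G ^ n) (1 - e)
      (fun n => (opLE_iff _ _).2 (sub_le_sub_left (hGpow_anti (Nat.le_succ n)) 1))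
      (fun n => (opLE_iff _ _).2 (sub_le_sub_left (hele n) 1))
      (fun ξ => by
        simp only [ContinuousLinearMap.sub_apply, ContinuousLinearMap.one_apply]
        exact tendsto_const_nhds.sub (hetend ξ))
    refine le_of_tendsto hnormal (Eventually.of_forall fun n => ?_)
    calc ρ (1 - G ^ n) ≤ ρ ((2:ℝ) • (1 - b)) := hρmono (hkey n)
      _ = 2 * ρ (1 - b) := by rw [map_smul]; rfl
  -- sqrt of b and h function
  set msqrt : (H →L[ℂ] H) → (H →L[ℂ] H) := fun x => cfc Real.sqrt x with hmsqrt_def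
  have hmsqrt_mul : ∀ x : H →L[ℂ] H, 0 ≤ x → msqrt x * msqrt x = x := by
    intro x hx
    have hxsa : IsSelfAdjoint x := IsSelfAdjoint.of_nonneg hx
    rw [hmsqrt_def]
    try simp only
    rw [← cfc_mul Real.sqrt Real.sqrt x Real.continuous_sqrt.continuousOn
      Real.continuous_sqrt.continuousOn]
    calc cfc (fun s => Real.sqrt s * Real.sqrt s) x = cfc (id : ℝ → ℝ) x := by
          apply cfc_congr
          intro s hs
          exact Real.mul_self_sqrt (spectrum_nonneg_of_nonneg hx hs)
      _ = x := cfc_id ℝ x hxsa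
  have hmsqrt0 : ∀ x : H →L[ℂ] H, 0 ≤ msqrt x :=
    fun x => cfc_nonneg fun s _ => Real.sqrt_nonneg s
  have hmsqrtsa : ∀ x : H →L[ℂ] H, IsSelfAdjoint (msqrt x) :=
    fun x => IsSelfAdjoint.of_nonneg (hmsqrt0 x)
  set sqb : H →L[ℂ] H := msqrt b with hsqb_def
  set hfun : ℝ → ℝ := fun s => g s * (Real.sqrt (max s 3⁻¹))⁻¹ with hhfun_def
  have hmaxpos : ∀ s : ℝ, (0:ℝ) < max s 3⁻¹ := fun s =>
    lt_of_lt_of_le (by norm_num) (le_max_right s 3⁻¹)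
  have hhcont : Continuous hfun := by
    apply Continuous.mul hgcont
    apply Continuous.inv₀
    · exact Real.continuous_sqrt.comp (continuous_id.max continuous_const)
    · intro s
      exact (Real.sqrt_pos.2 (hmaxpos s)).ne'
  set Hh : H →L[ℂ] H := cfc hfun b with hHh_def
  have hHsa : IsSelfAdjoint Hh := cfc_predicate hfun b
  have hsqrt_h_eq_g : ∀ s : ℝ, 0 ≤ s → Real.sqrt s * hfun s = g s := by
    intro s hs
    by_cases hc : s ≤ 3⁻¹
    · rw [hhfun_def]
      try simp only
      rw [hgsmall s hc]
      ring
    · push_neg at hc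
      rw [hhfun_def]
      try simp only
      rw [max_eq_left hc.le]
      have hspos : (0:ℝ) < s := lt_trans (by norm_num) hc
      have hne : Real.sqrt s ≠ 0 := (Real.sqrt_pos.2 hspos).ne'
      rw [mul_comm (g s) (Real.sqrt s)⁻¹, ← mul_assoc, mul_inv_cancel₀ hne, one_mul]
  have hsbh : sqb * Hh = G := by
    rw [hsqb_def, hmsqrt_def, hHh_def, hGdef]
    try simp only
    rw [← cfc_mul Real.sqrt hfun b Real.continuous_sqrt.continuousOn hhcont.continuousOn]
    apply cfc_congr
    intro s hs
    exact hsqrt_h_eq_g s (hbspec s hs).1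
  have hhsb : Hh * sqb = G := by
    rw [hsqb_def, hmsqrt_def, hHh_def, hGdef]
    try simp only
    rw [← cfc_mul hfun Real.sqrt b hhcont.continuousOn Real.continuous_sqrt.continuousOn]
    apply cfc_congr
    intro s hs
    show hfun s * Real.sqrt s = g s
    rw [mul_comm]
    exact hsqrt_h_eq_g s (hbspec s hs).1
  have hHsq : Hh * Hh ≤ algebraMap ℝ (H →L[ℂ] H) 3 := by
    rw [hHh_def]
    try simp only
    rw [← cfc_mul hfun hfun b hhcont.continuousOn hhcont.continuousOn]
    apply cfc_le_algebraMap _ _ _ _ (by fun_prop) hbsa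
    intro s hs
    have hg01 := hg0 s
    have hg11 := hg1 s
    have hmax := hmaxpos s
    have hmax3 : (3:ℝ)⁻¹ ≤ max s 3⁻¹ := le_max_right s 3⁻¹
    have hsq : Real.sqrt (max s 3⁻¹) * Real.sqrt (max s 3⁻¹) = max s 3⁻¹ :=
      Real.mul_self_sqrt hmax.le
    have hsqpos : (0:ℝ) < Real.sqrt (max s 3⁻¹) := Real.sqrt_pos.2 hmax
    rw [hhfun_def]
    try simp only
    have key : (Real.sqrt (max s 3⁻¹))⁻¹ * (Real.sqrt (max s 3⁻¹))⁻¹ = (max s 3⁻¹)⁻¹ := by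
      rw [← mul_inv, hsq]
    have hinvle : (max s 3⁻¹)⁻¹ ≤ 3 := by
      rw [inv_le_comm₀ hmax (by norm_num)]
      exact le_trans (by norm_num) hmax3
    calc g s * (Real.sqrt (max s 3⁻¹))⁻¹ * (g s * (Real.sqrt (max s 3⁻¹))⁻¹)
        = (g s * g s) * ((Real.sqrt (max s 3⁻¹))⁻¹ * (Real.sqrt (max s 3⁻¹))⁻¹) := by ring
      _ = (g s * g s) * (max s 3⁻¹)⁻¹ := by rw [key]
      _ ≤ 1 * 3 := by
          apply mul_le_mul
          · nlinarith
          · exact hinvle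
          · positivity
          · norm_num
      _ = 3 := by norm_num
  -- the key conjugation bound
  have hYe : ∀ m, e * Y m * e ≤ (3:ℝ) • e := by
    intro m
    set sqY : H →L[ℂ] H := msqrt (Y m) with hsqY_def
    have hsqY_mul : sqY * sqY = Y m := hmsqrt_mul (Y m) (hY0 m)
    have hsqY0 : 0 ≤ sqY := hmsqrt0 _
    have hsqYsa : IsSelfAdjoint sqY := hmsqrtsa _
    have hcommYsqY : sqY * Y m = Y m * sqY := by
      rw [← hsqY_mul, ← mul_assoc, mul_assoc]
    have hcomm : bs m * sqY = sqY * bs m := by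
      have e1 : bs m * sqY = bs m * sqY * (Y m * bs m) := by rw [(hbsY m).2, mul_one]
      have e2 : bs m * sqY * (Y m * bs m) = bs m * (sqY * Y m) * bs m := by
        simp only [mul_assoc]
      have e3 : bs m * (Y m * sqY) * bs m = (bs m * Y m) * (sqY * bs m) := by
        simp only [mul_assoc]
      rw [e1, e2, hcommYsqY, e3, (hbsY m).1, one_mul]
    have hsbs : sqY * bs m * sqY = 1 := by
      rw [← hcomm, mul_assoc, hsqY_mul, (hbsY m).1]
    have hconj : sqY * b * sqY ≤ 1 := by
      have := hsqYsa.conjugate_le_conjugate (hble m)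
      rwa [hsbs] at this
    set x : H →L[ℂ] H := sqb * sqY with hx_def
    have hsqb_mul : sqb * sqb = b := hmsqrt_mul b hb0
    have hxsx : star x * x = sqY * b * sqY := by
      rw [hx_def, star_mul, (hmsqrtsa b).star_eq, hsqYsa.star_eq]
      rw [mul_assoc, ← mul_assoc sqb sqb sqY, hsqb_mul, ← mul_assoc]
    have hxxs : x * star x = sqb * Y m * sqb := by
      rw [hx_def, star_mul, (hmsqrtsa b).star_eq, hsqYsa.star_eq]
      rw [mul_assoc, ← mul_assoc sqY sqY sqb, hsqY_mul, ← mul_assoc]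
    have hxnorm : ‖x‖ * ‖x‖ ≤ 1 := by
      rw [← CStarRing.norm_star_mul_self]
      rw [CStarAlgebra.norm_le_one_iff_of_nonneg _ (star_mul_self_nonneg x)]
      rw [hxsx]
      exact hconj
    have hkey2 : sqb * Y m * sqb ≤ 1 := by
      rw [← hxxs]
      rw [← CStarAlgebra.norm_le_one_iff_of_nonneg _ (mul_star_self_nonneg x)]
      rw [CStarRing.norm_self_mul_star]
      exact hxnorm
    calc e * Y m * e = (e * G) * Y m * (G * e) := by rw [heG, hGe]
      _ = (e * (Hh * sqb)) * Y m * ((sqb * Hh) * e) := by rw [hhsb, hsbh]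
      _ = (e * Hh) * (sqb * Y m * sqb) * (Hh * e) := by simp only [mul_assoc]
      _ = star (Hh * e) * (sqb * Y m * sqb) * (Hh * e) := by
          rw [star_mul, hesa.star_eq, hHsa.star_eq]
      _ ≤ star (Hh * e) * 1 * (Hh * e) := star_left_conjugate_le_conjugate hkey2 (Hh * e)
      _ = e * (Hh * Hh) * e := by
          rw [mul_one, star_mul, hesa.star_eq, hHsa.star_eq]
          simp only [mul_assoc]
      _ ≤ e * algebraMap ℝ (H →L[ℂ] H) 3 * e := hesa.conjugate_le_conjugate hHsq
      _ = (3:ℝ) • e := by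
          rw [Algebra.algebraMap_eq_smul_one, mul_smul_comm, smul_mul_assoc, mul_one, hee]
  -- norm bounds
  have heZe : ∀ m, e * Z m * e ≤ (2 / t) • e := by
    intro m
    have hexp : e * Y m * e = e + t • (e * Z m * e) := by
      have hYm : Y m = 1 + t • Z m := rfl
      rw [hYm, mul_add, add_mul, mul_one, hee, mul_smul_comm, smul_mul_assoc]
    have h3 := hYe m
    rw [hexp] at h3
    have h4 : t • (e * Z m * e) ≤ (2:ℝ) • e := by
      have : (3:ℝ) • e - e = (2:ℝ) • e := by module
      calc t • (e * Z m * e) = (e + t • (e * Z m * e)) - e := by abel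
        _ ≤ (3:ℝ) • e - e := by exact sub_le_sub_right h3 e
        _ = (2:ℝ) • e := this
    calc e * Z m * e = t⁻¹ • (t • (e * Z m * e)) := by
          rw [smul_smul, inv_mul_cancel₀ ht0.ne', one_smul]
      _ ≤ t⁻¹ • ((2:ℝ) • e) := smul_op_mono h4 (by positivity)
      _ = (2 / t) • e := by rw [smul_smul]; congr 1; field_simp
  have heconj_nonneg : ∀ {a : H →L[ℂ] H}, 0 ≤ a → 0 ≤ e * a * e := by
    intro a ha
    have := star_left_conjugate_nonneg ha e
    rwa [hesa.star_eq] at this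
  have h2t : (0:ℝ) ≤ 2 / t := by positivity
  have hsmul2t : ((2 / t) • e : H →L[ℂ] H) ≤ (2 / t) • 1 := smul_op_mono he1 h2t
  have halg : ((2 / t) • (1:H →L[ℂ] H)) = algebraMap ℝ (H →L[ℂ] H) (2 / t) := by
    rw [Algebra.algebraMap_eq_smul_one]
  -- partial sums
  set S : ℕ → H →L[ℂ] H := fun m => ∑ k ∈ range m, D k with hSdef
  have hS0 : ∀ m, 0 ≤ S m := fun m => Finset.sum_nonneg fun k _ => hDpos k
  have hSZ : ∀ m, S m ≤ Z m := by
    intro m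
    rw [hSdef, hZdef]
    apply Finset.sum_le_sum
    intro k _
    have : u k • D k - D k = (u k - 1) • D k := by
      rw [sub_smul, one_smul]
    have h2 : 0 ≤ u k • D k - D k := by
      rw [this]
      exact smul_op_nonneg (hDpos k) (by linarith [hu1 k])
    exact sub_nonneg.1 h2
  have heSe : ∀ m, ‖e * S m * e‖ ≤ 2 / t := by
    intro m
    rw [CStarAlgebra.norm_le_iff_le_algebraMap _ h2t (heconj_nonneg (hS0 m))]
    calc e * S m * e ≤ e * Z m * e := hesa.conjugate_le_conjugate (hSZ m)
      _ ≤ (2/t) • e := heZe m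
      _ ≤ (2/t) • 1 := hsmul2t
      _ = algebraMap ℝ (H →L[ℂ] H) (2/t) := halg
  -- single terms
  have heDe : ∀ m, ‖e * D m * e‖ ≤ (2 / t) * (u m)⁻¹ := by
    intro m
    have hum : 0 < u m := lt_of_lt_of_le one_pos (hu1 m)
    have h1 : u m • D m ≤ Z (m + 1) := by
      have hz : Z (m + 1) = Z m + u m • D m := by rw [hZdef]; exact Finset.sum_range_succ _ m
      rw [hz]
      exact le_add_of_nonneg_left (hZ0 m)
    have h2 : u m • (e * D m * e) ≤ algebraMap ℝ (H →L[ℂ] H) (2/t) := by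
      have h3 : e * (u m • D m) * e ≤ e * Z (m+1) * e := hesa.conjugate_le_conjugate h1
      have h4 : e * (u m • D m) * e = u m • (e * D m * e) := by
        rw [mul_smul_comm, smul_mul_assoc]
      rw [h4] at h3
      calc u m • (e * D m * e) ≤ e * Z (m+1) * e := h3
        _ ≤ (2/t) • e := heZe (m+1)
        _ ≤ (2/t) • 1 := hsmul2t
        _ = algebraMap ℝ (H →L[ℂ] H) (2/t) := halg
    have h5 : 0 ≤ u m • (e * D m * e) := smul_op_nonneg (heconj_nonneg (hDpos m)) hum.le
    have h6 : ‖u m • (e * D m * e)‖ ≤ 2/t := by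
      rw [CStarAlgebra.norm_le_iff_le_algebraMap _ h2t h5]
      exact h2
    have h7 : ‖u m • (e * D m * e)‖ = u m * ‖e * D m * e‖ := by
      rw [norm_smul, Real.norm_eq_abs, abs_of_pos hum]
    rw [h7] at h6
    calc ‖e * D m * e‖ = (u m)⁻¹ * (u m * ‖e * D m * e‖) := by
          field_simp
      _ ≤ (u m)⁻¹ * (2/t) := mul_le_mul_of_nonneg_left h6 (by positivity)
      _ = (2/t) * (u m)⁻¹ := mul_comm _ _
  -- convergence of ‖e D m e‖ to 0
  have hDtend : Tendsto (fun m => ‖e * D m * e‖) atTop (𝓝 0) := by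
    refine squeeze_zero (fun m => norm_nonneg _) heDe ?_
    have : Tendsto (fun m => (u m)⁻¹) atTop (𝓝 0) := hutop.inv_tendsto_atTop
    have := this.const_mul (2/t)
    simpa using this
  -- ρ(1-e) < ε'
  have hfinal : ρ (1 - e) < ε' := by
    have h1 : ρ (1 - e) ≤ 2 * (t * C') := by linarith
    have h2 : 2 * (t * C') < ε' := by
      rw [ht_def]
      rw [div_mul_eq_mul_div, ← mul_div_assoc]
      rw [div_lt_iff₀ (by positivity)]
      nlinarith
    linarith
  -- e ≠ 0
  have hene : e ≠ 0 := by
    intro hcon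
    rw [hcon, sub_zero, hρ.one] at hfinal
    have : ε' ≤ 2⁻¹ := min_le_right _ _
    linarith
  refine ⟨e, ⟨⟨heR, hesa⟩, ⟨hee, hesa⟩, hene, ⟨2/t, fun m => heSe m⟩, hDtend⟩, ?_⟩
  have hεε : ε' ≤ ε := min_le_left _ _
  calc ρ (1 - e) < ε' := hfinal
    _ ≤ ε := hεε
    _ < 2 * ε := by linarith


end Aux

/-- every bundle in a reversible JW-algebra contains projections `p`
with `ρ(p^⊥) < 2ε` for each `ε > 0`; in particular every bundle is nonempty. -/
theorem statement6 (R : Set (H →L[ℂ] H)) (hR : IsRealVNA R)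
    (ρ : (H →L[ℂ] H) →ₗ[ℝ] ℝ) (hρ : IsFNState (saPart R) ρ)
    (D : ℕ → H →L[ℂ] H) (hD : ∀ m, D m ∈ saPart R ∧ (D m).IsPositive)
    (hsum : Summable fun m => ρ (D m)) :
    (∀ ε > (0 : ℝ), ∃ p : H →L[ℂ] H, InBundle (saPart R) D p ∧ ρ (1 - p) < 2 * ε) ∧
    ∃ p : H →L[ℂ] H, InBundle (saPart R) D p := by
  refine ⟨main_core hR ρ hρ D hD hsum, ?_⟩
  obtain ⟨p, hp, -⟩ := main_core hR ρ hρ D hD hsum 1 one_pos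
  exact ⟨p, hp⟩

end JW
end

section
/- Let A be a reversible JW-algebra with faithful normal state ρ, and {x_n} ⊂ A pairwise orthogonal (ρ(x_i ∘ x_j) = 0 for i ≠ j). If ∑_{n=1}^∞ (log₂(n+1)/n)² ρ(|x_n|²) < ∞, then (1/n)∑_{j=1}^n x_j → 0 in bundle convergence in A. -/
open Filter Finset
open scoped ComplexOrder Topology

namespace JW

variable {H : Type*} [NormedAddCommGroup H] [InnerProductSpace ℂ H] [CompleteSpace H]

local notation "⟪" x ", " y "⟫" => @inner ℂ _ _ x y

private lemma real_smul_op (r : ℝ) (A : H →L[ℂ] H) : r • A = (r : ℂ) • A := by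
  rw [← algebraMap_smul ℂ r A, Complex.coe_algebraMap]

private lemma real_smul_vec (r : ℝ) (v : H) : r • v = (r : ℂ) • v := by
  rw [← algebraMap_smul ℂ r v, Complex.coe_algebraMap]

private lemma isSelfAdjoint_real_smul {a : H →L[ℂ] H} (ha : IsSelfAdjoint a) (r : ℝ) :
    IsSelfAdjoint (r • a) := by
  rw [real_smul_op, IsSelfAdjoint, star_smul, Complex.star_def, Complex.conj_ofReal, ha.star_eq]

private lemma re_inner_mul_self {a : H →L[ℂ] H} (ha : IsSelfAdjoint a) (ξ : H) :
    RCLike.re ⟪(a * a) ξ, ξ⟫ = ‖a ξ‖ ^ 2 := by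
  have h2 := ContinuousLinearMap.adjoint_inner_left a ξ (a ξ)
  rw [ContinuousLinearMap.isSelfAdjoint_iff'.1 ha] at h2
  have h1 : (a * a) ξ = a (a ξ) := rfl
  rw [h1, h2, ← inner_self_eq_norm_sq (𝕜 := ℂ)]

private lemma mul_self_isPositive {a : H →L[ℂ] H} (ha : IsSelfAdjoint a) :
    (a * a).IsPositive := by
  constructor
  · rw [← ContinuousLinearMap.isSelfAdjoint_iff_isSymmetric, IsSelfAdjoint, star_mul, ha.star_eq]
  · intro ξ
    rw [ContinuousLinearMap.reApplyInnerSelf_apply, re_inner_mul_self ha]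
    positivity

private lemma isPositive_real_smul {T : H →L[ℂ] H} (hT : T.IsPositive) {c : ℝ} (hc : 0 ≤ c) :
    (c • T).IsPositive := by
  refine ⟨ContinuousLinearMap.isSelfAdjoint_iff_isSymmetric.1 (isSelfAdjoint_real_smul hT.isSelfAdjoint c), fun ξ => ?_⟩
  have h1 : (c • T).reApplyInnerSelf ξ = c * T.reApplyInnerSelf ξ := by
    rw [ContinuousLinearMap.reApplyInnerSelf_apply, ContinuousLinearMap.reApplyInnerSelf_apply,
      ContinuousLinearMap.smul_apply, real_smul_vec, inner_smul_left]
    simp [Complex.conj_ofReal]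
  rw [h1]
  exact mul_nonneg hc (hT.2 ξ)

private lemma isPositive_sum {ι : Type*} (s : Finset ι) (f : ι → H →L[ℂ] H)
    (h : ∀ i ∈ s, (f i).IsPositive) : (∑ i ∈ s, f i).IsPositive := by
  refine Finset.sum_induction f _ (fun a b ha hb => ha.add hb) ?_ h
  exact ⟨ContinuousLinearMap.isSelfAdjoint_iff_isSymmetric.1 (IsSelfAdjoint.zero _), fun ξ => by
    simp [ContinuousLinearMap.reApplyInnerSelf_apply]⟩

private lemma mem_saPart_sum {R : Set (H →L[ℂ] H)} (hR : IsRealVNA R) {ι : Type*}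
    (s : Finset ι) (f : ι → H →L[ℂ] H) (h : ∀ i ∈ s, f i ∈ saPart R) :
    (∑ i ∈ s, f i) ∈ saPart R :=
  Finset.sum_induction f (· ∈ saPart R)
    (fun _ _ ha hb => ⟨hR.add_mem ha.1 hb.1, ha.2.add hb.2⟩)
    ⟨hR.zero_mem, (IsSelfAdjoint.zero _)⟩ h

private lemma mem_saPart_smul {R : Set (H →L[ℂ] H)} (hR : IsRealVNA R) (r : ℝ)
    {a : H →L[ℂ] H} (h : a ∈ saPart R) : r • a ∈ saPart R :=
  ⟨hR.smul_mem r h.1, isSelfAdjoint_real_smul h.2 r⟩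

private lemma mem_saPart_mul_self {R : Set (H →L[ℂ] H)} (hR : IsRealVNA R)
    {a : H →L[ℂ] H} (h : a ∈ saPart R) : a * a ∈ saPart R :=
  ⟨hR.mul_mem h.1 h.1, by rw [IsSelfAdjoint, star_mul, h.2.star_eq]⟩

private lemma prefix_bound :
    ∀ (k : ℕ) (v : ℕ → H) (m : ℕ), m < 2 ^ k →
    ‖∑ j ∈ Finset.range m, v j‖ ≤
      ∑ i ∈ Finset.range k, Real.sqrt (∑ l ∈ Finset.range (2 ^ (k - i)),
        ‖∑ j ∈ Finset.Ico (l * 2 ^ i) ((l + 1) * 2 ^ i), v j‖ ^ 2) := by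
  intro k
  induction k with
  | zero =>
      intro v m hm
      have hm0 : m = 0 := by omega
      subst hm0; simp
  | succ k ih =>
      intro v m hm
      by_cases h : m < 2 ^ k
      · refine (ih v m h).trans ?_
        rw [Finset.sum_range_succ]
        refine le_trans (Finset.sum_le_sum (fun i hi => ?_)) (le_add_of_nonneg_right (Real.sqrt_nonneg _))
        apply Real.sqrt_le_sqrt
        apply Finset.sum_le_sum_of_subset_of_nonneg
        · exact Finset.range_subset_range.2 (Nat.pow_le_pow_right (by norm_num) (by omega))
        · intros; positivity
      · have h2k : 2 ^ k ≤ m := le_of_not_gt h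
        have hp : (2:ℕ) ^ (k+1) = 2 ^ k + 2 ^ k := by rw [pow_succ]; omega
        have hm2 : m - 2 ^ k < 2 ^ k := by omega
        have hsplit : ∑ j ∈ Finset.range m, v j
            = (∑ j ∈ Finset.range (2 ^ k), v j) + ∑ j ∈ Finset.Ico (2 ^ k) m, v j :=
          (Finset.sum_range_add_sum_Ico v h2k).symm
        have hIco : ∑ j ∈ Finset.Ico (2 ^ k) m, v j
            = ∑ j ∈ Finset.range (m - 2 ^ k), v (2 ^ k + j) :=
          Finset.sum_Ico_eq_sum_range _ _ _
        have hrec := ih (fun j => v (2 ^ k + j)) (m - 2 ^ k) hm2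
        -- first chunk bound, scale i = k
        have hfirst : ‖∑ j ∈ Finset.range (2 ^ k), v j‖ ≤
            Real.sqrt (∑ l ∈ Finset.range (2 ^ (k + 1 - k)),
              ‖∑ j ∈ Finset.Ico (l * 2 ^ k) ((l + 1) * 2 ^ k), v j‖ ^ 2) := by
          have h0 : ‖∑ j ∈ Finset.Ico (0 * 2 ^ k) ((0 + 1) * 2 ^ k), v j‖ ^ 2
              ≤ ∑ l ∈ Finset.range (2 ^ (k + 1 - k)),
                ‖∑ j ∈ Finset.Ico (l * 2 ^ k) ((l + 1) * 2 ^ k), v j‖ ^ 2 := by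
            apply Finset.single_le_sum (f := fun l =>
              ‖∑ j ∈ Finset.Ico (l * 2 ^ k) ((l + 1) * 2 ^ k), v j‖ ^ 2)
              (fun l _ => by positivity)
            exact Finset.mem_range.2 (pow_pos (by norm_num) _)
          simp only [zero_mul, zero_add, one_mul, ← Finset.range_eq_Ico] at h0
          calc ‖∑ j ∈ Finset.range (2 ^ k), v j‖
              = Real.sqrt (‖∑ j ∈ Finset.range (2 ^ k), v j‖ ^ 2) :=
                (Real.sqrt_sq (norm_nonneg _)).symm
            _ ≤ _ := Real.sqrt_le_sqrt h0
        -- shifted chunks bound, scales i < k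
        have hshift : ∀ i ∈ Finset.range k,
            Real.sqrt (∑ l ∈ Finset.range (2 ^ (k - i)),
              ‖∑ j ∈ Finset.Ico (l * 2 ^ i) ((l + 1) * 2 ^ i), v (2 ^ k + j)‖ ^ 2)
            ≤ Real.sqrt (∑ l ∈ Finset.range (2 ^ (k + 1 - i)),
              ‖∑ j ∈ Finset.Ico (l * 2 ^ i) ((l + 1) * 2 ^ i), v j‖ ^ 2) := by
          intro i hi
          have hik : i < k := Finset.mem_range.1 hi
          apply Real.sqrt_le_sqrt
          set N := 2 ^ (k - i) with hN
          have hNd : N * 2 ^ i = 2 ^ k := by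
            rw [hN, ← pow_add]; congr 1; omega
          have hterm : ∀ l, ∑ j ∈ Finset.Ico (l * 2 ^ i) ((l + 1) * 2 ^ i), v (2 ^ k + j)
              = ∑ j ∈ Finset.Ico ((N + l) * 2 ^ i) ((N + l + 1) * 2 ^ i), v j := by
            intro l
            rw [Finset.sum_Ico_eq_sum_range, Finset.sum_Ico_eq_sum_range]
            have e1 : (l + 1) * 2 ^ i - l * 2 ^ i = 2 ^ i := by
              rw [show (l + 1) * 2 ^ i = l * 2 ^ i + 2 ^ i from by ring,
                Nat.add_sub_cancel_left]
            have e2 : (N + l + 1) * 2 ^ i - (N + l) * 2 ^ i = 2 ^ i := by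
              rw [show (N + l + 1) * 2 ^ i = (N + l) * 2 ^ i + 2 ^ i from by ring,
                Nat.add_sub_cancel_left]
            rw [e1, e2]
            apply Finset.sum_congr rfl
            intro t _
            congr 1
            have hNl : (N + l) * 2 ^ i = 2 ^ k + l * 2 ^ i := by rw [add_mul, hNd]
            rw [hNl, add_assoc]
          calc ∑ l ∈ Finset.range N,
                ‖∑ j ∈ Finset.Ico (l * 2 ^ i) ((l + 1) * 2 ^ i), v (2 ^ k + j)‖ ^ 2
              = ∑ l ∈ Finset.range N,
                ‖∑ j ∈ Finset.Ico ((N + l) * 2 ^ i) ((N + l + 1) * 2 ^ i), v j‖ ^ 2 := by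
                refine Finset.sum_congr rfl fun l _ => by rw [hterm l]
            _ = ∑ l ∈ Finset.Ico N (N + N),
                ‖∑ j ∈ Finset.Ico (l * 2 ^ i) ((l + 1) * 2 ^ i), v j‖ ^ 2 := by
                rw [Finset.sum_Ico_eq_sum_range]
                simp only [Nat.add_sub_cancel_left]
            _ ≤ ∑ l ∈ Finset.range (2 ^ (k + 1 - i)),
                ‖∑ j ∈ Finset.Ico (l * 2 ^ i) ((l + 1) * 2 ^ i), v j‖ ^ 2 := by
                apply Finset.sum_le_sum_of_subset_of_nonneg
                · intro l hl
                  rw [Finset.mem_Ico] at hl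
                  rw [Finset.mem_range]
                  have hNN : N + N = 2 ^ (k + 1 - i) := by
                    rw [hN, ← two_mul, ← pow_succ']
                    congr 1; omega
                  rw [← hNN]; exact hl.2
                · intros; positivity
        calc ‖∑ j ∈ Finset.range m, v j‖
            ≤ ‖∑ j ∈ Finset.range (2 ^ k), v j‖ + ‖∑ j ∈ Finset.Ico (2 ^ k) m, v j‖ := by
              rw [hsplit]; exact norm_add_le _ _
          _ ≤ (∑ i ∈ Finset.range k, Real.sqrt (∑ l ∈ Finset.range (2 ^ (k + 1 - i)),
                ‖∑ j ∈ Finset.Ico (l * 2 ^ i) ((l + 1) * 2 ^ i), v j‖ ^ 2))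
              + Real.sqrt (∑ l ∈ Finset.range (2 ^ (k + 1 - k)),
                ‖∑ j ∈ Finset.Ico (l * 2 ^ k) ((l + 1) * 2 ^ k), v j‖ ^ 2) := by
              rw [hIco] at *
              have := (hrec.trans (Finset.sum_le_sum hshift))
              linarith [hfirst, this]
          _ = ∑ i ∈ Finset.range (k + 1), Real.sqrt (∑ l ∈ Finset.range (2 ^ (k + 1 - i)),
                ‖∑ j ∈ Finset.Ico (l * 2 ^ i) ((l + 1) * 2 ^ i), v j‖ ^ 2) := by
              rw [Finset.sum_range_succ]

private lemma sum_blocks (f : ℕ → ℝ) (d a : ℕ) :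
    ∀ L : ℕ, ∑ l ∈ Finset.range L, ∑ j ∈ Finset.Ico (a + l * d) (a + (l + 1) * d), f j
      = ∑ j ∈ Finset.Ico a (a + L * d), f j := by
  intro L
  induction L with
  | zero => simp
  | succ L ihL =>
      rw [Finset.sum_range_succ, ihL]
      rw [Finset.sum_Ico_consecutive]
      · exact Nat.le_add_right _ _
      · have : (L + 1) * d = L * d + d := by ring
        omega



private lemma rho_sq_sum (ρ : (H →L[ℂ] H) →ₗ[ℝ] ℝ) (x : ℕ → H →L[ℂ] H)
    (horth : ∀ i j, i ≠ j → ρ (jord (x i) (x j)) = 0) (s : Finset ℕ) :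
    ρ ((∑ j ∈ s, x j) * (∑ j ∈ s, x j)) = ∑ j ∈ s, ρ (x j * x j) := by
  classical
  have hkey : ∀ i j : ℕ, ρ (x i * x j) + ρ (x j * x i) = 2 * ρ (jord (x i) (x j)) := by
    intro i j
    have : ρ (jord (x i) (x j)) = 2⁻¹ * (ρ (x i * x j) + ρ (x j * x i)) := by
      rw [jord, map_smul, map_add]; simp [smul_eq_mul]
    rw [this]; ring
  have hexp : ρ ((∑ j ∈ s, x j) * (∑ j ∈ s, x j))
      = ∑ i ∈ s, ∑ j ∈ s, ρ (x i * x j) := by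
    rw [Finset.sum_mul_sum, map_sum]
    exact Finset.sum_congr rfl fun i _ => map_sum ρ _ s
  have hswap : ∑ i ∈ s, ∑ j ∈ s, ρ (x i * x j) = ∑ i ∈ s, ∑ j ∈ s, ρ (x j * x i) :=
    Finset.sum_comm
  have hjord : ∑ i ∈ s, ∑ j ∈ s, ρ (jord (x i) (x j)) = ∑ j ∈ s, ρ (x j * x j) := by
    have hdiag : ∀ i ∈ s, ∑ j ∈ s, ρ (jord (x i) (x j)) = ρ (jord (x i) (x i)) := by
      intro i hi
      exact Finset.sum_eq_single_of_mem i hi fun j _ hji => horth i j (fun h => hji h.symm)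
    rw [Finset.sum_congr rfl hdiag]
    refine Finset.sum_congr rfl fun i _ => ?_
    have : jord (x i) (x i) = x i * x i := by
      rw [jord, ← two_smul ℝ (x i * x i), smul_smul]
      norm_num
    rw [this]
  have h2 : (2:ℝ) * (∑ i ∈ s, ∑ j ∈ s, ρ (x i * x j))
      = 2 * ∑ j ∈ s, ρ (x j * x j) := by
    calc (2:ℝ) * (∑ i ∈ s, ∑ j ∈ s, ρ (x i * x j))
        = (∑ i ∈ s, ∑ j ∈ s, ρ (x i * x j)) + ∑ i ∈ s, ∑ j ∈ s, ρ (x j * x i) := by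
          rw [← hswap]; ring
      _ = ∑ i ∈ s, ∑ j ∈ s, (ρ (x i * x j) + ρ (x j * x i)) := by
          rw [← Finset.sum_add_distrib]
          exact Finset.sum_congr rfl fun i _ => (Finset.sum_add_distrib).symm
      _ = ∑ i ∈ s, ∑ j ∈ s, 2 * ρ (jord (x i) (x j)) := by
          exact Finset.sum_congr rfl fun i _ => Finset.sum_congr rfl fun j _ => hkey i j
      _ = 2 * ∑ i ∈ s, ∑ j ∈ s, ρ (jord (x i) (x j)) := by
          rw [Finset.mul_sum]
          exact Finset.sum_congr rfl fun i _ => (Finset.mul_sum _ _ _).symm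
      _ = 2 * ∑ j ∈ s, ρ (x j * x j) := by rw [hjord]
  rw [hexp]
  linarith

private lemma geom_tail_bound (j K : ℕ) :
    ∑ k ∈ Finset.range K, (if j < 2 ^ k then ((4:ℝ)⁻¹) ^ k else 0)
      ≤ (4/3) * (((j:ℝ) + 1)⁻¹) ^ 2 := by
  set k0 := Nat.clog 2 (j + 1) with hk0
  have hstep1 : ∑ k ∈ Finset.range K, (if j < 2 ^ k then ((4:ℝ)⁻¹) ^ k else 0)
      ≤ ∑ k ∈ Finset.range K, (if k0 ≤ k then ((4:ℝ)⁻¹) ^ k else 0) := by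
    apply Finset.sum_le_sum
    intro k _
    by_cases h : j < 2 ^ k
    · have hk : k0 ≤ k := by
        rw [hk0]
        exact (Nat.clog_le_iff_le_pow (by norm_num)).2 (by omega)
      rw [if_pos h, if_pos hk]
    · rw [if_neg h]
      split <;> positivity
  have hstep2 : ∑ k ∈ Finset.range K, (if k0 ≤ k then ((4:ℝ)⁻¹) ^ k else 0)
      ≤ ((4:ℝ)⁻¹) ^ k0 * (4/3) := by
    rw [← Finset.sum_filter]
    have hsub : (Finset.range K).filter (fun k => k0 ≤ k) ⊆ Finset.Ico k0 (k0 + K) := by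
      intro k hk
      simp only [Finset.mem_filter, Finset.mem_range] at hk
      simp only [Finset.mem_Ico]
      omega
    calc ∑ k ∈ (Finset.range K).filter (fun k => k0 ≤ k), ((4:ℝ)⁻¹) ^ k
        ≤ ∑ k ∈ Finset.Ico k0 (k0 + K), ((4:ℝ)⁻¹) ^ k :=
          Finset.sum_le_sum_of_subset_of_nonneg hsub (fun _ _ _ => by positivity)
      _ = ∑ t ∈ Finset.range K, ((4:ℝ)⁻¹) ^ (k0 + t) := by
          rw [Finset.sum_Ico_eq_sum_range]
          simp only [Nat.add_sub_cancel_left]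
      _ = ((4:ℝ)⁻¹) ^ k0 * ∑ t ∈ Finset.range K, ((4:ℝ)⁻¹) ^ t := by
          rw [Finset.mul_sum]
          exact Finset.sum_congr rfl fun t _ => pow_add _ _ _
      _ ≤ ((4:ℝ)⁻¹) ^ k0 * (4/3) := by
          apply mul_le_mul_of_nonneg_left _ (by positivity)
          have hs : Summable (fun t : ℕ => ((4:ℝ)⁻¹) ^ t) :=
            summable_geometric_of_lt_one (by norm_num) (by norm_num)
          calc ∑ t ∈ Finset.range K, ((4:ℝ)⁻¹) ^ t
              ≤ ∑' t : ℕ, ((4:ℝ)⁻¹) ^ t :=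
                Summable.sum_le_tsum _ (fun _ _ => by positivity) hs
            _ = (1 - 4⁻¹)⁻¹ := tsum_geometric_of_lt_one (by norm_num) (by norm_num)
            _ = 4/3 := by norm_num
  have hk0b : ((j:ℝ) + 1) ≤ 2 ^ k0 := by
    have := Nat.le_pow_clog (by norm_num : 1 < 2) (j + 1)
    exact_mod_cast this
  have hpow : ((4:ℝ)⁻¹) ^ k0 ≤ (((j:ℝ) + 1)⁻¹) ^ 2 := by
    have h1 : ((j:ℝ) + 1) ^ 2 ≤ ((2:ℝ) ^ k0) ^ 2 :=
      pow_le_pow_left₀ (by positivity) hk0b 2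
    have h2 : ((2:ℝ) ^ k0) ^ 2 = (4:ℝ) ^ k0 := by
      rw [← pow_mul, mul_comm k0 2, pow_mul]; norm_num
    rw [inv_pow, ← inv_pow, inv_pow ((j:ℝ)+1), inv_pow]
    apply inv_anti₀ (by positivity)
    rw [← h2]; exact h1
  calc ∑ k ∈ Finset.range K, (if j < 2 ^ k then ((4:ℝ)⁻¹) ^ k else 0)
      ≤ ((4:ℝ)⁻¹) ^ k0 * (4/3) := hstep1.trans hstep2
    _ ≤ (((j:ℝ) + 1)⁻¹) ^ 2 * (4/3) := mul_le_mul_of_nonneg_right hpow (by norm_num)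
    _ = (4/3) * (((j:ℝ) + 1)⁻¹) ^ 2 := by ring

private lemma F_partial_bound {b : ℕ → ℝ} (hb : ∀ j, 0 ≤ b j) (K : ℕ) :
    ∑ k ∈ Finset.range K, ((4:ℝ)⁻¹) ^ k * ∑ j ∈ Finset.range (2 ^ k), b j
      ≤ (4/3) * ∑ j ∈ Finset.range (2 ^ K), (((j:ℝ) + 1)⁻¹) ^ 2 * b j := by
  have hext : ∀ k ∈ Finset.range K,
      ((4:ℝ)⁻¹) ^ k * ∑ j ∈ Finset.range (2 ^ k), b j
        = ∑ j ∈ Finset.range (2 ^ K), (if j < 2 ^ k then ((4:ℝ)⁻¹) ^ k else 0) * b j := by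
    intro k hk
    have hkK : (2:ℕ) ^ k ≤ 2 ^ K :=
      Nat.pow_le_pow_right (by norm_num) (le_of_lt (Finset.mem_range.1 hk))
    calc ((4:ℝ)⁻¹) ^ k * ∑ j ∈ Finset.range (2 ^ k), b j
        = ∑ j ∈ Finset.range (2 ^ k), (if j < 2 ^ k then ((4:ℝ)⁻¹) ^ k else 0) * b j := by
          rw [Finset.mul_sum]
          exact Finset.sum_congr rfl fun j hj => by rw [if_pos (Finset.mem_range.1 hj)]
      _ = ∑ j ∈ Finset.range (2 ^ K), (if j < 2 ^ k then ((4:ℝ)⁻¹) ^ k else 0) * b j := by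
          apply Finset.sum_subset (Finset.range_subset_range.2 hkK)
          intro x _ hx
          rw [if_neg (fun hc => hx (Finset.mem_range.2 hc)), zero_mul]
  calc ∑ k ∈ Finset.range K, ((4:ℝ)⁻¹) ^ k * ∑ j ∈ Finset.range (2 ^ k), b j
      = ∑ k ∈ Finset.range K, ∑ j ∈ Finset.range (2 ^ K),
          (if j < 2 ^ k then ((4:ℝ)⁻¹) ^ k else 0) * b j := Finset.sum_congr rfl hext
    _ = ∑ j ∈ Finset.range (2 ^ K), ∑ k ∈ Finset.range K,
          (if j < 2 ^ k then ((4:ℝ)⁻¹) ^ k else 0) * b j := Finset.sum_comm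
    _ = ∑ j ∈ Finset.range (2 ^ K),
          (∑ k ∈ Finset.range K, (if j < 2 ^ k then ((4:ℝ)⁻¹) ^ k else 0)) * b j := by
        exact Finset.sum_congr rfl fun j _ => (Finset.sum_mul _ _ _).symm
    _ ≤ ∑ j ∈ Finset.range (2 ^ K), ((4/3) * (((j:ℝ) + 1)⁻¹) ^ 2) * b j :=
        Finset.sum_le_sum fun j _ =>
          mul_le_mul_of_nonneg_right (geom_tail_bound j K) (hb j)
    _ = (4/3) * ∑ j ∈ Finset.range (2 ^ K), (((j:ℝ) + 1)⁻¹) ^ 2 * b j := by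
        rw [Finset.mul_sum]
        exact Finset.sum_congr rfl fun j _ => by ring

private lemma blocks_range (g : ℕ → ℝ) :
    ∀ K : ℕ, ∑ k ∈ Finset.range K, ∑ j ∈ Finset.Ico (2 ^ k) (2 ^ (k + 1)), g j
      = ∑ j ∈ Finset.Ico 1 (2 ^ K), g j := by
  intro K
  induction K with
  | zero => simp
  | succ K ih =>
      rw [Finset.sum_range_succ, ih, Finset.sum_Ico_consecutive]
      · exact Nat.one_le_two_pow
      · exact Nat.pow_le_pow_right (by norm_num) (by omega)

private lemma G_coeff_bound (k j : ℕ) (hj1 : 2 ^ k ≤ j) (hj2 : j < 2 ^ (k + 1)) :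
    ((k:ℝ)) ^ 2 * ((4:ℝ)⁻¹) ^ k ≤
      4 * (Real.logb 2 ((j:ℝ) + 2) / ((j:ℝ) + 1)) ^ 2 := by
  have h1 : (k:ℝ) ≤ Real.logb 2 ((j:ℝ) + 2) := by
    have hc : ((2:ℝ)) ^ k ≤ (j:ℝ) + 2 := by
      have : ((2:ℕ) ^ k : ℝ) ≤ (j:ℝ) := by exact_mod_cast hj1
      push_cast at this ⊢
      linarith
    calc (k:ℝ) = Real.logb 2 ((2:ℝ) ^ k) := by
          rw [Real.logb_pow, Real.logb_self_eq_one (by norm_num), mul_one]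
      _ ≤ Real.logb 2 ((j:ℝ) + 2) :=
          Real.logb_le_logb_of_le (by norm_num) (by positivity) hc
  have h2 : (j:ℝ) + 1 ≤ 2 * 2 ^ k := by
    have : ((j:ℝ)) + 1 ≤ ((2:ℕ) ^ (k + 1) : ℝ) := by
      have : j + 1 ≤ 2 ^ (k + 1) := hj2
      exact_mod_cast this
    calc ((j:ℝ)) + 1 ≤ ((2:ℕ) ^ (k + 1) : ℝ) := this
      _ = 2 * 2 ^ k := by push_cast [pow_succ]; ring
  have h4 : (k:ℝ) / (2 * 2 ^ k) ≤ Real.logb 2 ((j:ℝ) + 2) / ((j:ℝ) + 1) :=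
    div_le_div₀ (le_trans (by positivity) h1) h1 (by positivity) h2
  have h5 : ((k:ℝ) / (2 * 2 ^ k)) ^ 2 ≤ (Real.logb 2 ((j:ℝ) + 2) / ((j:ℝ) + 1)) ^ 2 :=
    pow_le_pow_left₀ (by positivity) h4 2
  have h6 : ((k:ℝ) / (2 * 2 ^ k)) ^ 2 = (k:ℝ) ^ 2 / (4 * 4 ^ k) := by
    rw [div_pow, mul_pow, ← pow_mul, mul_comm k 2, pow_mul]
    norm_num
  have h7 : (k:ℝ) ^ 2 * ((4:ℝ)⁻¹) ^ k = 4 * ((k:ℝ) ^ 2 / (4 * 4 ^ k)) := by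
    have h40 : ((4:ℝ)) ^ k ≠ 0 := by positivity
    rw [inv_pow, ← div_eq_mul_inv]
    field_simp
  rw [h7]
  rw [h6] at h5
  exact mul_le_mul_of_nonneg_left h5 (by norm_num)


set_option maxHeartbeats 2000000 in
/-- Rademacher–Menshov-type theorem: if `{x_n} ⊂ A` are pairwise
orthogonal and `∑ (log₂(n+1)/n)² ρ(|x_n|²) < ∞`, then the Cesàro means
`(1/n) ∑_{j=1}^n x_j` converge to `0` in bundle convergence in `A`.
(Here the sequence is indexed from `0`, so `x k` plays the role of `x_{k+1}`.) -/
theorem statement12 (R : Set (H →L[ℂ] H)) (hR : IsRealVNA R)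
    (ρ : (H →L[ℂ] H) →ₗ[ℝ] ℝ) (hρ : IsFNState (saPart R) ρ)
    (x : ℕ → H →L[ℂ] H) (hx : ∀ n, x n ∈ saPart R)
    (horth : ∀ i j, i ≠ j → ρ (jord (x i) (x j)) = 0)
    (hsum : Summable fun n : ℕ =>
      (Real.logb 2 ((n : ℝ) + 2) / ((n : ℝ) + 1)) ^ 2 * ρ (x n ^ 2)) :
    BundleConv (saPart R) ρ
      (fun n => ((n : ℝ)⁻¹) • ∑ j ∈ Finset.range n, x j) 0 := by
  classical
  have hxR : ∀ j, x j ∈ R := fun j => (hx j).1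
  have hxsa : ∀ j, IsSelfAdjoint (x j) := fun j => (hx j).2
  set b : ℕ → ℝ := fun j => ρ (x j * x j) with hbdef
  have hb : ∀ j, 0 ≤ b j := fun j => hρ.pos _ (mul_self_isPositive (hxsa j))
  set w : ℕ → ℝ := fun j => (Real.logb 2 ((j:ℝ) + 2) / ((j:ℝ) + 1)) ^ 2 with hwdef
  have hsum' : Summable (fun j => w j * b j) := by
    refine hsum.congr fun j => ?_
    simp only [hwdef, hbdef]
    rw [pow_two (x j)]
  have hwb0 : ∀ j, 0 ≤ w j * b j := fun j => mul_nonneg (sq_nonneg _) (hb j)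
  set CW : ℝ := ∑' j, w j * b j with hCW
  have hwle : ∀ j : ℕ, (((j:ℝ) + 1)⁻¹) ^ 2 ≤ w j := by
    intro j
    have hL : (1:ℝ) ≤ Real.logb 2 ((j:ℝ) + 2) := by
      calc (1:ℝ) = Real.logb 2 2 := (Real.logb_self_eq_one (by norm_num)).symm
        _ ≤ Real.logb 2 ((j:ℝ) + 2) :=
          Real.logb_le_logb_of_le (by norm_num) (by norm_num)
            (by linarith [Nat.cast_nonneg (α := ℝ) j])
    have h1 : (1:ℝ) / ((j:ℝ) + 1) ≤ Real.logb 2 ((j:ℝ) + 2) / ((j:ℝ) + 1) :=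
      div_le_div₀ (le_trans zero_le_one hL) hL (by positivity) le_rfl
    calc (((j:ℝ) + 1)⁻¹) ^ 2 = ((1:ℝ) / ((j:ℝ) + 1)) ^ 2 := by rw [one_div]
      _ ≤ w j := pow_le_pow_left₀ (by positivity) h1 2
  set S : ℕ → (H →L[ℂ] H) := fun n => ∑ j ∈ Finset.range n, x j with hSdef
  set T : ℕ → ℕ → ℕ → (H →L[ℂ] H) := fun k i l =>
    ∑ j ∈ Finset.Ico (2 ^ k + l * 2 ^ i) (2 ^ k + (l + 1) * 2 ^ i), x j with hTdef
  set F : ℕ → (H →L[ℂ] H) := fun k =>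
    (((4:ℝ)⁻¹) ^ k) • (S (2 ^ k) * S (2 ^ k)) with hFdef
  set G : ℕ → (H →L[ℂ] H) := fun k => ((k : ℝ) * ((4:ℝ)⁻¹) ^ k) •
    ∑ i ∈ Finset.range k, ∑ l ∈ Finset.range (2 ^ (k - i)), T k i l * T k i l with hGdef
  have hSA : ∀ n, S n ∈ saPart R := fun n => mem_saPart_sum hR _ _ (fun j _ => hx j)
  have hTA : ∀ k i l, T k i l ∈ saPart R := fun k i l => mem_saPart_sum hR _ _ (fun j _ => hx j)
  have hFA : ∀ k, F k ∈ saPart R :=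
    fun k => mem_saPart_smul hR _ (mem_saPart_mul_self hR (hSA _))
  have hGA : ∀ k, G k ∈ saPart R := fun k =>
    mem_saPart_smul hR _ (mem_saPart_sum hR _ _ (fun i _ =>
      mem_saPart_sum hR _ _ (fun l _ => mem_saPart_mul_self hR (hTA k i l))))
  have hFpos : ∀ k, (F k).IsPositive := fun k =>
    isPositive_real_smul (mul_self_isPositive (hSA _).2) (by positivity)
  have hGpos : ∀ k, (G k).IsPositive := fun k =>
    isPositive_real_smul (isPositive_sum _ _ (fun i _ =>
      isPositive_sum _ _ (fun l _ => mul_self_isPositive (hTA k i l).2)))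
      (by positivity)
  refine ⟨fun k => F k + G k, fun k =>
    ⟨⟨hR.add_mem (hFA k).1 (hGA k).1, (hFA k).2.add (hGA k).2⟩, (hFpos k).add (hGpos k)⟩,
    ?_, ?_⟩
  · -- Summability
    have hρF : ∀ k, ρ (F k) = ((4:ℝ)⁻¹) ^ k * ∑ j ∈ Finset.range (2 ^ k), b j := by
      intro k
      rw [hFdef]
      rw [map_smul, smul_eq_mul, rho_sq_sum ρ x horth]
    have hρG : ∀ k, ρ (G k)
        = ((k:ℝ)) ^ 2 * ((4:ℝ)⁻¹) ^ k * ∑ j ∈ Finset.Ico (2 ^ k) (2 ^ (k + 1)), b j := by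
      intro k
      rw [hGdef, map_smul, smul_eq_mul, map_sum]
      have hin : ∀ i ∈ Finset.range k,
          ρ (∑ l ∈ Finset.range (2 ^ (k - i)), T k i l * T k i l)
            = ∑ j ∈ Finset.Ico (2 ^ k) (2 ^ (k + 1)), b j := by
        intro i hi
        rw [map_sum]
        have hterm : ∀ l, ρ (T k i l * T k i l)
            = ∑ j ∈ Finset.Ico (2 ^ k + l * 2 ^ i) (2 ^ k + (l + 1) * 2 ^ i), b j :=
          fun l => rho_sq_sum ρ x horth _
        rw [Finset.sum_congr rfl fun l _ => hterm l]
        rw [sum_blocks b (2 ^ i) (2 ^ k) (2 ^ (k - i))]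
        congr 1
        have hik : i < k := Finset.mem_range.1 hi
        have h1 : (2:ℕ) ^ (k - i) * 2 ^ i = 2 ^ k := by
          rw [← pow_add]; congr 1; omega
        rw [h1, ← two_mul, ← pow_succ']
      rw [Finset.sum_congr rfl hin, Finset.sum_const, Finset.card_range, nsmul_eq_mul]
      ring
    apply summable_of_sum_range_le (c := (4/3) * CW + 4 * CW)
    · intro k
      exact hρ.pos _ ((hFpos k).add (hGpos k))
    · intro K
      have hsplit2 : ∑ k ∈ Finset.range K, ρ (F k + G k)
          = (∑ k ∈ Finset.range K, ρ (F k)) + ∑ k ∈ Finset.range K, ρ (G k) := by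
        rw [← Finset.sum_add_distrib]
        exact Finset.sum_congr rfl fun k _ => map_add ρ _ _
      have hFbound : ∑ k ∈ Finset.range K, ρ (F k) ≤ (4/3) * CW := by
        rw [Finset.sum_congr rfl fun k _ => hρF k]
        refine (F_partial_bound hb K).trans ?_
        have h1 : ∑ j ∈ Finset.range (2 ^ K), (((j:ℝ) + 1)⁻¹) ^ 2 * b j
            ≤ ∑ j ∈ Finset.range (2 ^ K), w j * b j :=
          Finset.sum_le_sum fun j _ => mul_le_mul_of_nonneg_right (hwle j) (hb j)
        have h2 : ∑ j ∈ Finset.range (2 ^ K), w j * b j ≤ CW :=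
          Summable.sum_le_tsum _ (fun j _ => hwb0 j) hsum'
        nlinarith
      have hGbound : ∑ k ∈ Finset.range K, ρ (G k) ≤ 4 * CW := by
        rw [Finset.sum_congr rfl fun k _ => hρG k]
        have hk4 : ∀ k : ℕ, (k:ℝ) ^ 2 * ((4:ℝ)⁻¹) ^ k * ∑ j ∈ Finset.Ico (2 ^ k) (2 ^ (k+1)), b j
            ≤ 4 * ∑ j ∈ Finset.Ico (2 ^ k) (2 ^ (k+1)), w j * b j := by
          intro k
          rw [Finset.mul_sum, Finset.mul_sum]
          refine Finset.sum_le_sum fun j hj => ?_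
          rw [Finset.mem_Ico] at hj
          have := G_coeff_bound k j hj.1 hj.2
          calc (k:ℝ) ^ 2 * ((4:ℝ)⁻¹) ^ k * b j ≤ (4 * w j) * b j :=
            mul_le_mul_of_nonneg_right this (hb j)
            _ = 4 * (w j * b j) := by ring
        calc ∑ k ∈ Finset.range K, (k:ℝ) ^ 2 * ((4:ℝ)⁻¹) ^ k
              * ∑ j ∈ Finset.Ico (2 ^ k) (2 ^ (k+1)), b j
            ≤ ∑ k ∈ Finset.range K, 4 * ∑ j ∈ Finset.Ico (2 ^ k) (2 ^ (k+1)), w j * b j :=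
              Finset.sum_le_sum fun k _ => hk4 k
          _ = 4 * ∑ k ∈ Finset.range K, ∑ j ∈ Finset.Ico (2 ^ k) (2 ^ (k+1)), w j * b j := by
              rw [Finset.mul_sum]
          _ = 4 * ∑ j ∈ Finset.Ico 1 (2 ^ K), w j * b j := by
              rw [blocks_range (fun j => w j * b j) K]
          _ ≤ 4 * CW := by
              have h2 : ∑ j ∈ Finset.Ico 1 (2 ^ K), w j * b j ≤ CW :=
                Summable.sum_le_tsum _ (fun j _ => hwb0 j) hsum'
              linarith
      linarith [hsplit2, hFbound, hGbound]
  · -- convergence on the bundle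
    rintro p ⟨-, ⟨-, hpsa⟩, -, -, htend⟩
    simp only [sub_zero]
    have hre : ∀ (kk : ℕ) (ξ : H),
        RCLike.re (inner ℂ ((F kk + G kk) (p ξ)) (p ξ) : ℂ)
          ≤ ‖p * (F kk + G kk) * p‖ * ‖ξ‖ ^ 2 := by
      intro kk ξ
      have hmv : (inner ℂ ((F kk + G kk) (p ξ)) (p ξ) : ℂ)
          = inner ℂ ((p * (F kk + G kk) * p) ξ) ξ := by
        have h1 : (p * (F kk + G kk) * p) ξ = p ((F kk + G kk) (p ξ)) := by
          rw [ContinuousLinearMap.mul_apply, ContinuousLinearMap.mul_apply]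
        have h2 := ContinuousLinearMap.adjoint_inner_left p ξ ((F kk + G kk) (p ξ))
        rw [ContinuousLinearMap.isSelfAdjoint_iff'.1 hpsa] at h2
        rw [h1, h2]
      rw [hmv]
      calc RCLike.re (inner ℂ ((p * (F kk + G kk) * p) ξ) ξ : ℂ)
          ≤ ‖(p * (F kk + G kk) * p) ξ‖ * ‖ξ‖ := re_inner_le_norm _ _
        _ ≤ (‖p * (F kk + G kk) * p‖ * ‖ξ‖) * ‖ξ‖ :=
            mul_le_mul_of_nonneg_right (ContinuousLinearMap.le_opNorm _ _) (norm_nonneg _)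
        _ = ‖p * (F kk + G kk) * p‖ * ‖ξ‖ ^ 2 := by ring
    have hFre : ∀ (kk : ℕ) (η : H),
        RCLike.re (inner ℂ (F kk η) η : ℂ) = ((4:ℝ)⁻¹) ^ kk * ‖S (2 ^ kk) η‖ ^ 2 := by
      intro kk η
      have h1 : F kk η = (((4:ℝ)⁻¹) ^ kk) • ((S (2 ^ kk) * S (2 ^ kk)) η) :=
        ContinuousLinearMap.smul_apply _ _ _
      rw [h1, real_smul_vec, inner_smul_left, Complex.conj_ofReal, RCLike.re_to_complex,
        Complex.re_ofReal_mul, ← RCLike.re_to_complex, re_inner_mul_self (hSA _).2]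
    have hGre : ∀ (kk : ℕ) (η : H),
        RCLike.re (inner ℂ (G kk η) η : ℂ)
          = ((kk:ℝ) * ((4:ℝ)⁻¹) ^ kk) *
            ∑ i ∈ Finset.range kk, ∑ l ∈ Finset.range (2 ^ (kk - i)), ‖T kk i l η‖ ^ 2 := by
      intro kk η
      have h1 : G kk η = ((kk:ℝ) * ((4:ℝ)⁻¹) ^ kk) •
          ((∑ i ∈ Finset.range kk, ∑ l ∈ Finset.range (2 ^ (kk - i)),
            T kk i l * T kk i l) η) := ContinuousLinearMap.smul_apply _ _ _
      rw [h1, real_smul_vec, inner_smul_left, Complex.conj_ofReal, RCLike.re_to_complex,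
        Complex.re_ofReal_mul, ← RCLike.re_to_complex]
      congr 1
      rw [ContinuousLinearMap.sum_apply, sum_inner, map_sum]
      refine Finset.sum_congr rfl fun i _ => ?_
      rw [ContinuousLinearMap.sum_apply, sum_inner, map_sum]
      exact Finset.sum_congr rfl fun l _ => re_inner_mul_self (hTA kk i l).2 η
    have key : ∀ n : ℕ, 1 ≤ n →
        ‖p * (((n:ℝ))⁻¹ • S n) ^ 2 * p‖
          ≤ 2 * ‖p * (F (Nat.log 2 n) + G (Nat.log 2 n)) * p‖ := by
      intro n hn
      set k := Nat.log 2 n with hkdef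
      have hk1 : 2 ^ k ≤ n := Nat.pow_log_le_self 2 (by omega)
      have hk2 : n < 2 ^ (k + 1) := Nat.lt_pow_succ_log_self (by norm_num) n
      have hcsa : IsSelfAdjoint (((n:ℝ))⁻¹ • S n) := isSelfAdjoint_real_smul (hSA n).2 _
      have hop : p * (((n:ℝ))⁻¹ • S n) ^ 2 * p
          = star ((((n:ℝ))⁻¹ • S n) * p) * ((((n:ℝ))⁻¹ • S n) * p) := by
        rw [star_mul, hcsa.star_eq, hpsa.star_eq, sq]
        noncomm_ring
      rw [hop, CStarRing.norm_star_mul_self]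
      have hpow2 : (((2:ℝ) ^ k)⁻¹) ^ 2 = ((4:ℝ)⁻¹) ^ k := by
        rw [inv_pow, ← pow_mul, mul_comm k 2, pow_mul, ← inv_pow]
        norm_num
      have hvec : ∀ ξ : H, ‖((((n:ℝ))⁻¹ • S n) * p) ξ‖ ^ 2
          ≤ 2 * (‖p * (F k + G k) * p‖ * ‖ξ‖ ^ 2) := by
        intro ξ
        set η := p ξ with hη
        set u : ℕ → H := fun j => x j η with hudef
        have happ : ((((n:ℝ))⁻¹ • S n) * p) ξ = (n:ℝ)⁻¹ • (S n η) := by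
          rw [ContinuousLinearMap.mul_apply, ContinuousLinearMap.smul_apply]
        have hSapp : ∀ m : ℕ, S m η = ∑ j ∈ Finset.range m, u j := fun m =>
          ContinuousLinearMap.sum_apply _ _ _
        have hTapp : ∀ i l, (∑ j ∈ Finset.Ico (l * 2 ^ i) ((l + 1) * 2 ^ i), u (2 ^ k + j))
            = T k i l η := by
          intro i l
          have h1 : T k i l η
              = ∑ j ∈ Finset.Ico (2 ^ k + l * 2 ^ i) (2 ^ k + (l + 1) * 2 ^ i), u j :=
            ContinuousLinearMap.sum_apply _ _ _
          rw [h1, Finset.sum_Ico_eq_sum_range, Finset.sum_Ico_eq_sum_range]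
          have e1 : (l + 1) * 2 ^ i - l * 2 ^ i = 2 ^ i := by
            rw [show (l + 1) * 2 ^ i = l * 2 ^ i + 2 ^ i from by ring, Nat.add_sub_cancel_left]
          have e2 : 2 ^ k + (l + 1) * 2 ^ i - (2 ^ k + l * 2 ^ i) = 2 ^ i := by
            rw [show 2 ^ k + (l + 1) * 2 ^ i = (2 ^ k + l * 2 ^ i) + 2 ^ i from by ring,
              Nat.add_sub_cancel_left]
          rw [e1, e2]
          exact Finset.sum_congr rfl fun t _ => by rw [add_assoc]
        have hmlt : n - 2 ^ k < 2 ^ k := by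
          have hdouble : (2:ℕ) ^ (k + 1) = 2 ^ k + 2 ^ k := by rw [pow_succ]; omega
          omega
        have hpre := prefix_bound k (fun j => u (2 ^ k + j)) (n - 2 ^ k) hmlt
        set alpha := ‖S (2 ^ k) η‖ with halpha
        set W2 : ℝ := ∑ i ∈ Finset.range k, ∑ l ∈ Finset.range (2 ^ (k - i)),
          ‖T k i l η‖ ^ 2 with hW2
        set sg : ℝ := ∑ i ∈ Finset.range k,
          Real.sqrt (∑ l ∈ Finset.range (2 ^ (k - i)), ‖T k i l η‖ ^ 2) with hsg
        have hDelta : ‖∑ j ∈ Finset.Ico (2 ^ k) n, u j‖ ≤ sg := by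
          rw [Finset.sum_Ico_eq_sum_range]
          refine hpre.trans (le_of_eq ?_)
          refine Finset.sum_congr rfl fun i _ => ?_
          congr 1
          exact Finset.sum_congr rfl fun l _ => by rw [hTapp i l]
        have hsplit : S n η = S (2 ^ k) η + ∑ j ∈ Finset.Ico (2 ^ k) n, u j := by
          rw [hSapp, hSapp]
          exact (Finset.sum_range_add_sum_Ico u hk1).symm
        have hnormS : ‖S n η‖ ≤ alpha + sg := by
          rw [hsplit]
          exact (norm_add_le _ _).trans (add_le_add le_rfl hDelta)
        have hninv : ((n:ℝ))⁻¹ ≤ ((2:ℝ) ^ k)⁻¹ := by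
          apply inv_anti₀ (by positivity)
          exact_mod_cast hk1
        have hnorm1 : ‖((((n:ℝ))⁻¹ • S n) * p) ξ‖ ≤ ((2:ℝ) ^ k)⁻¹ * (alpha + sg) := by
          rw [happ, norm_smul, Real.norm_eq_abs, abs_of_nonneg (by positivity)]
          exact mul_le_mul hninv hnormS (norm_nonneg _) (by positivity)
        have hsgnn : 0 ≤ sg := Finset.sum_nonneg fun i _ => Real.sqrt_nonneg _
        have hannn : 0 ≤ alpha := norm_nonneg _
        have hs2 : sg ^ 2 ≤ (k:ℝ) * W2 := by
          have hcs := sq_sum_le_card_mul_sum_sq (s := Finset.range k)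
            (f := fun i => Real.sqrt (∑ l ∈ Finset.range (2 ^ (k - i)), ‖T k i l η‖ ^ 2))
          rw [Finset.card_range] at hcs
          refine hcs.trans (le_of_eq ?_)
          congr 1
          refine Finset.sum_congr rfl fun i _ => ?_
          exact Real.sq_sqrt (Finset.sum_nonneg fun l _ => sq_nonneg _)
        have hsq : ‖((((n:ℝ))⁻¹ • S n) * p) ξ‖ ^ 2 ≤ ((4:ℝ)⁻¹) ^ k * (alpha + sg) ^ 2 := by
          calc ‖((((n:ℝ))⁻¹ • S n) * p) ξ‖ ^ 2
              ≤ (((2:ℝ) ^ k)⁻¹ * (alpha + sg)) ^ 2 :=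
                pow_le_pow_left₀ (norm_nonneg _) hnorm1 2
            _ = ((4:ℝ)⁻¹) ^ k * (alpha + sg) ^ 2 := by rw [mul_pow, hpow2]
        have h4knn : (0:ℝ) ≤ ((4:ℝ)⁻¹) ^ k := by positivity
        have hW2nn : 0 ≤ W2 := Finset.sum_nonneg fun i _ =>
          Finset.sum_nonneg fun l _ => sq_nonneg _
        have hmain : ‖((((n:ℝ))⁻¹ • S n) * p) ξ‖ ^ 2
            ≤ 2 * (((4:ℝ)⁻¹) ^ k * alpha ^ 2) + 2 * (((k:ℝ) * ((4:ℝ)⁻¹) ^ k) * W2) := by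
          have h2ab : (alpha + sg) ^ 2 ≤ 2 * alpha ^ 2 + 2 * sg ^ 2 := by
            nlinarith [sq_nonneg (alpha - sg)]
          calc ‖((((n:ℝ))⁻¹ • S n) * p) ξ‖ ^ 2
              ≤ ((4:ℝ)⁻¹) ^ k * (alpha + sg) ^ 2 := hsq
            _ ≤ ((4:ℝ)⁻¹) ^ k * (2 * alpha ^ 2 + 2 * sg ^ 2) :=
                mul_le_mul_of_nonneg_left h2ab h4knn
            _ = 2 * (((4:ℝ)⁻¹) ^ k * alpha ^ 2) + 2 * (((4:ℝ)⁻¹) ^ k * sg ^ 2) := by ring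
            _ ≤ 2 * (((4:ℝ)⁻¹) ^ k * alpha ^ 2)
                + 2 * (((4:ℝ)⁻¹) ^ k * ((k:ℝ) * W2)) := by
                have := mul_le_mul_of_nonneg_left hs2 h4knn
                linarith
            _ = 2 * (((4:ℝ)⁻¹) ^ k * alpha ^ 2) + 2 * (((k:ℝ) * ((4:ℝ)⁻¹) ^ k) * W2) := by
                ring
        have hreFG : RCLike.re (inner ℂ ((F k + G k) η) η : ℂ)
            = ((4:ℝ)⁻¹) ^ k * alpha ^ 2 + ((k:ℝ) * ((4:ℝ)⁻¹) ^ k) * W2 := by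
          rw [ContinuousLinearMap.add_apply, inner_add_left, map_add, hFre, hGre]
        calc ‖((((n:ℝ))⁻¹ • S n) * p) ξ‖ ^ 2
            ≤ 2 * (((4:ℝ)⁻¹) ^ k * alpha ^ 2) + 2 * (((k:ℝ) * ((4:ℝ)⁻¹) ^ k) * W2) := hmain
          _ = 2 * RCLike.re (inner ℂ ((F k + G k) η) η : ℂ) := by rw [hreFG]; ring
          _ ≤ 2 * (‖p * (F k + G k) * p‖ * ‖ξ‖ ^ 2) := by
              have hh := hre k ξ
              rw [← hη] at hh
              linarith
      have hnle : ‖(((n:ℝ))⁻¹ • S n) * p‖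
          ≤ Real.sqrt (2 * ‖p * (F k + G k) * p‖) := by
        refine ContinuousLinearMap.opNorm_le_bound _ (Real.sqrt_nonneg _) fun ξ => ?_
        have h := hvec ξ
        have h1 : ‖((((n:ℝ))⁻¹ • S n) * p) ξ‖
            = Real.sqrt (‖((((n:ℝ))⁻¹ • S n) * p) ξ‖ ^ 2) :=
          (Real.sqrt_sq (norm_nonneg _)).symm
        rw [h1]
        calc Real.sqrt (‖((((n:ℝ))⁻¹ • S n) * p) ξ‖ ^ 2)
            ≤ Real.sqrt (2 * ‖p * (F k + G k) * p‖ * ‖ξ‖ ^ 2) := by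
              apply Real.sqrt_le_sqrt
              calc ‖((((n:ℝ))⁻¹ • S n) * p) ξ‖ ^ 2
                  ≤ 2 * (‖p * (F k + G k) * p‖ * ‖ξ‖ ^ 2) := h
                _ = 2 * ‖p * (F k + G k) * p‖ * ‖ξ‖ ^ 2 := by ring
          _ = Real.sqrt (2 * ‖p * (F k + G k) * p‖) * ‖ξ‖ := by
              rw [Real.sqrt_mul (by positivity), Real.sqrt_sq (norm_nonneg _)]
      calc ‖(((n:ℝ))⁻¹ • S n) * p‖ * ‖(((n:ℝ))⁻¹ • S n) * p‖
          ≤ Real.sqrt (2 * ‖p * (F k + G k) * p‖)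
            * Real.sqrt (2 * ‖p * (F k + G k) * p‖) :=
            mul_self_le_mul_self (norm_nonneg _) hnle
        _ = 2 * ‖p * (F k + G k) * p‖ := Real.mul_self_sqrt (by positivity)
    have hlog : Tendsto (fun n : ℕ => Nat.log 2 n) atTop atTop := by
      refine tendsto_atTop_atTop.2 fun m => ⟨2 ^ m, fun n hn => ?_⟩
      calc m = Nat.log 2 (2 ^ m) := (Nat.log_pow (by norm_num) m).symm
        _ ≤ Nat.log 2 n := Nat.log_mono_right hn
    have htend2 : Tendsto (fun n : ℕ => 2 * ‖p * (F (Nat.log 2 n) + G (Nat.log 2 n)) * p‖)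
        atTop (𝓝 0) := by
      have h0 := (htend.comp hlog).const_mul (2:ℝ)
      simpa using h0
    refine squeeze_zero' (Eventually.of_forall fun n => norm_nonneg _) ?_ htend2
    filter_upwards [eventually_ge_atTop 1] with n hn
    exact key n hn

end JW
end

section
/- Let A be a reversible JW-algebra with faithful normal semifinite trace τ, and τ₁ its extension to the enveloping von Neumann algebra W(A). If z ∈ R(A) is τ₁-integrable (τ₁(|z|) < ∞) and skew-symmetric (z* = −z), then τ₁(z) = 0. -/
open Filter Finset
open scoped ComplexOrder Topology

namespace JW

variable {H : Type*} [NormedAddCommGroup H] [InnerProductSpace ℂ H] [CompleteSpace H]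

/-- if `z ∈ R(A)` is `τ₁`-integrable and skew-symmetric (`z* = -z`),
then `τ₁(z) = 0`. Here integrable elements form a submodule `N` and the extended
trace `τ₁` is linear on `N` and satisfies `τ₁(a + ib) = τ₁(a)` for positive `a + ib`
with `a ∈ R` self-adjoint, `b ∈ R` skew; `w` plays the role of `|z|`. -/
theorem statement15 (R : Set (H →L[ℂ] H)) (hR : IsRealVNA R)
    (N : Submodule ℂ (H →L[ℂ] H)) (τ₁ : (H →L[ℂ] H) → ℂ)
    (hadd : ∀ a ∈ N, ∀ b ∈ N, τ₁ (a + b) = τ₁ a + τ₁ b)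
    (hsmul : ∀ (c : ℂ), ∀ a ∈ N, τ₁ (c • a) = c * τ₁ a)
    (hext : ∀ a b : H →L[ℂ] H, a ∈ R → b ∈ R → IsSelfAdjoint a → star b = -b →
      a + Complex.I • b ∈ N → (a + Complex.I • b).IsPositive →
      τ₁ (a + Complex.I • b) = τ₁ a ∧ (τ₁ a).im = 0)
    (z w : H →L[ℂ] H) (hz : z ∈ R) (hzN : z ∈ N) (hzskew : star z = -z)
    -- `w = |z|`
    (hw : w ∈ R) (hwN : w ∈ N) (hwpos : w.IsPositive) (hww : w * w = star z * z) :
    τ₁ z = 0 := by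
  set k : H →L[ℂ] H := Complex.I • z with hk_def
  have hw0 : (0 : H →L[ℂ] H) ≤ w := (ContinuousLinearMap.nonneg_iff_isPositive w).2 hwpos
  have hwsa : IsSelfAdjoint w := IsSelfAdjoint.of_nonneg hw0
  have hksa : IsSelfAdjoint k := by
    rw [IsSelfAdjoint, hk_def, star_smul, hzskew]
    simp [Complex.star_def, Complex.conj_I]
  -- k * k = w * w
  have hkk : k * k = w * w := by
    rw [hww, hzskew, hk_def, smul_mul_smul_comm, Complex.I_mul_I, neg_mul, neg_one_smul]
  -- w = k⁺ + k⁻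
  have hpq : k⁺ * k⁻ = 0 := CFC.posPart_mul_negPart k
  have hqp : k⁻ * k⁺ = 0 := CFC.negPart_mul_posPart k
  have hsum_nonneg : (0 : H →L[ℂ] H) ≤ k⁺ + k⁻ :=
    add_nonneg (CFC.posPart_nonneg k) (CFC.negPart_nonneg k)
  have hsq : (k⁺ + k⁻) * (k⁺ + k⁻) = k * k := by
    conv_rhs => rw [← CFC.posPart_sub_negPart k hksa]
    simp only [add_mul, mul_add, sub_mul, mul_sub, hpq, hqp]
    abel
  have hw_eq : w = k⁺ + k⁻ := by
    have h1 : CFC.sqrt (k * k) = w := CFC.sqrt_unique (hkk ▸ rfl) hw0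
    have h2 : CFC.sqrt (k * k) = k⁺ + k⁻ := CFC.sqrt_unique hsq hsum_nonneg
    rw [← h1, h2]
  -- positivity of w + I • z
  have hpos : (w + Complex.I • z).IsPositive := by
    rw [← ContinuousLinearMap.nonneg_iff_isPositive, ← hk_def, hw_eq]
    have : k⁺ + k⁻ + k = k⁺ + k⁺ := by
      nth_rw 3 [← CFC.posPart_sub_negPart k hksa]
      abel
    rw [this]
    exact add_nonneg (CFC.posPart_nonneg k) (CFC.posPart_nonneg k)
  have hmemN : w + Complex.I • z ∈ N := N.add_mem hwN (N.smul_mem _ hzN)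
  obtain ⟨heq, -⟩ := hext w z hw hz hwsa hzskew hmemN hpos
  have h2 : τ₁ (w + Complex.I • z) = τ₁ w + τ₁ (Complex.I • z) :=
    hadd w hwN _ (N.smul_mem _ hzN)
  have h3 : τ₁ (Complex.I • z) = Complex.I * τ₁ z := hsmul _ z hzN
  have : Complex.I * τ₁ z = 0 := by
    have := h2.symm.trans heq
    rw [h3] at this
    linear_combination this
  simpa [Complex.I_ne_zero] using mul_eq_zero.mp this

end JW
end

section
/- Let A be a reversible JW-algebra with faithful normal state ρ. If {x_n} ⊂ A is uniformly bounded and converges almost uniformly to x ∈ A (for each ε > 0 there is a projection p ∈ A with ρ(p^⊥) < ε and ‖p(x_n − x)²p‖ → 0), then x_n → x in the strong operator topology on H. -/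
open Filter Finset
open scoped ComplexOrder Topology

namespace JW

variable {H : Type*} [NormedAddCommGroup H] [InnerProductSpace ℂ H] [CompleteSpace H]

local notation "⟪" x ", " y "⟫" => @inner ℂ _ _ x y

lemma aux_kill {G : H →L[ℂ] H} (hsa : IsSelfAdjoint G)
    (hpos : ∀ v : H, 0 ≤ (⟪G v, v⟫).re) {w : H} (hw : (⟪G w, w⟫).re = 0) :
    G w = 0 := by
  have hsym : ∀ u v : H, ⟪G u, v⟫ = ⟪u, G v⟫ := fun u v => by
    have h : ContinuousLinearMap.adjoint G = G := ContinuousLinearMap.isSelfAdjoint_iff'.mp hsa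
    conv_lhs => rw [← h, ContinuousLinearMap.adjoint_inner_left]
  have hrezero : ∀ u : H, (⟪G u, w⟫).re = 0 := by
    intro u
    have hre1 : (⟪G w, u⟫).re = (⟪G u, w⟫).re := by
      calc (⟪G w, u⟫).re = (⟪w, G u⟫).re := by rw [hsym w u]
        _ = ((starRingEnd ℂ) ⟪G u, w⟫).re := by rw [inner_conj_symm]
        _ = (⟪G u, w⟫).re := Complex.conj_re _
    have hquad : ∀ t : ℝ, 0 ≤ (⟪G u, u⟫).re + 2 * t * (⟪G u, w⟫).re := by
      intro t
      have h0 := hpos (u + (t : ℂ) • w)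
      have hexp : ⟪G (u + (t:ℂ) • w), u + (t:ℂ) • w⟫
          = ⟪G u, u⟫ + (t:ℂ) * ⟪G w, u⟫ + (t:ℂ) * ⟪G u, w⟫ + (t:ℂ) * (t:ℂ) * ⟪G w, w⟫ := by
        simp only [map_add, map_smul, inner_add_left, inner_add_right, inner_smul_left,
          inner_smul_right, Complex.conj_ofReal]
        ring
      have hrecalc : (⟪G (u + (t:ℂ) • w), u + (t:ℂ) • w⟫).re
          = (⟪G u, u⟫).re + 2 * t * (⟪G u, w⟫).re + t * t * (⟪G w, w⟫).re := by
        rw [hexp]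
        simp only [Complex.add_re, Complex.mul_re, Complex.ofReal_re, Complex.ofReal_im,
          Complex.mul_im, hre1]
        ring
      rw [hrecalc, hw] at h0
      simp only [mul_zero, add_zero] at h0
      exact h0
    by_contra hb
    set a := (⟪G u, u⟫).re with ha
    set b := (⟪G u, w⟫).re with hbdef
    have h1 := hquad (-(a + 1) / (2 * b))
    have h2 : 2 * (-(a + 1) / (2 * b)) * b = -(a + 1) := by
      field_simp
    rw [h2] at h1
    linarith
  have himzero : ∀ u : H, (⟪G u, w⟫).im = 0 := by
    intro u
    have h := hrezero (Complex.I • u)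
    rw [map_smul, inner_smul_left, Complex.conj_I] at h
    simp only [Complex.mul_re, Complex.neg_re, Complex.I_re, Complex.neg_im, Complex.I_im,
      neg_zero, zero_mul, neg_neg, one_mul, zero_add] at h
    linarith
  have hvanish : ∀ u : H, ⟪G u, w⟫ = 0 := by
    intro u
    have h1 := hrezero u
    have h2 := himzero u
    exact Complex.ext (by simpa using h1) (by simpa using h2)
  have hfinal : ⟪G w, G w⟫ = 0 := by
    have h := hvanish (G w)
    rwa [hsym (G w) w] at h
  exact inner_self_eq_zero.mp hfinal

lemma aux_ultralimit (𝒰 : Ultrafilter ℕ) (g : ℕ → H →L[ℂ] H) (c : ℝ)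
    (hgb : ∀ n, ‖g n‖ ≤ c) :
    ∃ G : H →L[ℂ] H, ∀ η ζ : H,
      Tendsto (fun n => ⟪g n η, ζ⟫) (𝒰 : Filter ℕ) (𝓝 ⟪G η, ζ⟫) := by
  have hc : 0 ≤ c := le_trans (norm_nonneg _) (hgb 0)
  have hbnd : ∀ (n : ℕ) (η ζ : H), ‖⟪g n η, ζ⟫‖ ≤ c * ‖η‖ * ‖ζ‖ := by
    intro n η ζ
    calc ‖⟪g n η, ζ⟫‖ ≤ ‖g n η‖ * ‖ζ‖ := norm_inner_le_norm _ _
      _ ≤ (c * ‖η‖) * ‖ζ‖ := by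
          have h1 : ‖g n η‖ ≤ ‖g n‖ * ‖η‖ := (g n).le_opNorm η
          have h2 : ‖g n‖ * ‖η‖ ≤ c * ‖η‖ := mul_le_mul_of_nonneg_right (hgb n) (norm_nonneg _)
          exact mul_le_mul_of_nonneg_right (h1.trans h2) (norm_nonneg _)
      _ = c * ‖η‖ * ‖ζ‖ := by ring
  have hex : ∀ η ζ : H, ∃ z : ℂ, Tendsto (fun n => ⟪g n η, ζ⟫) (𝒰 : Filter ℕ) (𝓝 z) := by
    intro η ζ
    obtain ⟨z, _, hz⟩ := (isCompact_closedBall (0:ℂ) (c * ‖η‖ * ‖ζ‖)).ultrafilter_le_nhds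
      (𝒰.map fun n => ⟪g n η, ζ⟫)
      (le_principal_iff.mpr (Filter.mem_map.mpr (Filter.univ_mem' fun n => by
        simpa [Metric.mem_closedBall, dist_zero_right] using hbnd n η ζ)))
    exact ⟨z, hz⟩
  choose B hB using hex
  have hBadd2 : ∀ η ζ ζ' : H, B η (ζ + ζ') = B η ζ + B η ζ' := fun η ζ ζ' =>
    tendsto_nhds_unique (hB η (ζ + ζ'))
      (by simpa only [inner_add_right] using (hB η ζ).add (hB η ζ'))
  have hBsmul2 : ∀ (η : H) (a : ℂ) (ζ : H), B η (a • ζ) = a * B η ζ := fun η a ζ =>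
    tendsto_nhds_unique (hB η (a • ζ))
      (by simpa only [inner_smul_right] using (hB η ζ).const_mul a)
  have hBnorm : ∀ η ζ : H, ‖B η ζ‖ ≤ c * ‖η‖ * ‖ζ‖ := fun η ζ =>
    le_of_tendsto (hB η ζ).norm (Filter.Eventually.of_forall fun n => hbnd n η ζ)
  have hfun : ∀ η : H, ∃ w : H, ∀ ζ, ⟪w, ζ⟫ = B η ζ := by
    intro η
    let L : H →ₗ[ℂ] ℂ :=
      { toFun := fun ζ => B η ζ
        map_add' := hBadd2 η
        map_smul' := fun a ζ => hBsmul2 η a ζ }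
    refine ⟨(InnerProductSpace.toDual ℂ H).symm
      (L.mkContinuous (c * ‖η‖) (fun ζ => by
        simpa [L, mul_assoc] using hBnorm η ζ)), fun ζ => ?_⟩
    rw [InnerProductSpace.toDual_symm_apply]
    rfl
  choose w hw using hfun
  have hwadd : ∀ η η' : H, w (η + η') = w η + w η' := by
    intro η η'
    refine ext_inner_right ℂ fun ζ => ?_
    rw [hw, inner_add_left, hw, hw]
    exact tendsto_nhds_unique (hB (η + η') ζ)
      (by simpa only [map_add, inner_add_left] using (hB η ζ).add (hB η' ζ))
  have hwsmul : ∀ (a : ℂ) (η : H), w (a • η) = a • w η := by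
    intro a η
    refine ext_inner_right ℂ fun ζ => ?_
    rw [hw, inner_smul_left, hw]
    exact tendsto_nhds_unique (hB (a • η) ζ)
      (by simpa only [map_smul, inner_smul_left] using (hB η ζ).const_mul ((starRingEnd ℂ) a))
  have hwb : ∀ η : H, ‖w η‖ ≤ c * ‖η‖ := by
    intro η
    rcases eq_or_ne (w η) 0 with h0 | h0
    · rw [h0, norm_zero]
      exact mul_nonneg hc (norm_nonneg _)
    · have h1 : ‖w η‖ * ‖w η‖ ≤ (c * ‖η‖) * ‖w η‖ := by
        have e1 : ‖w η‖ * ‖w η‖ = RCLike.re ⟪w η, w η⟫ := (inner_self_eq_norm_mul_norm (w η)).symm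
        rw [e1, hw]
        calc RCLike.re (B η (w η)) ≤ ‖B η (w η)‖ := RCLike.re_le_norm _
          _ ≤ c * ‖η‖ * ‖w η‖ := hBnorm η (w η)
      exact le_of_mul_le_mul_right h1 (norm_pos_iff.mpr h0)
  let Glin : H →ₗ[ℂ] H :=
    { toFun := w
      map_add' := hwadd
      map_smul' := hwsmul }
  refine ⟨Glin.mkContinuous c hwb, fun η ζ => ?_⟩
  rw [show ⟪(Glin.mkContinuous c hwb) η, ζ⟫ = B η ζ from hw η ζ]
  exact hB η ζ


/-- a uniformly bounded sequence in a reversible JW-algebra which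
converges almost uniformly converges in the strong operator topology. -/
theorem statement19 (R : Set (H →L[ℂ] H)) (hR : IsRealVNA R)
    (ρ : (H →L[ℂ] H) →ₗ[ℝ] ℝ) (hρ : IsFNState (saPart R) ρ)
    (x : ℕ → H →L[ℂ] H) (hx : ∀ n, x n ∈ saPart R)
    (l : H →L[ℂ] H) (hl : l ∈ saPart R)
    (hbdd : ∃ C : ℝ, ∀ n, ‖x n‖ ≤ C)
    (hau : AUConv (saPart R) ρ x l) :
    ∀ ξ : H, Tendsto (fun n => x n ξ) atTop (𝓝 (l ξ)) := by

  classical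
  obtain ⟨C, hC⟩ := hbdd
  by_contra hcon
  push_neg at hcon
  obtain ⟨ξ, hξ⟩ := hcon
  set y : ℕ → H →L[ℂ] H := fun n => x n - l with hy
  have hdiv : ∃ δ > (0:ℝ), ∃ᶠ n in atTop, δ ≤ ‖y n ξ‖ := by
    have h' : ¬ Tendsto (fun n => ‖x n ξ - l ξ‖) atTop (𝓝 0) := fun h =>
      hξ (tendsto_iff_norm_sub_tendsto_zero.mpr h)
    rw [Metric.tendsto_atTop] at h'
    push_neg at h'
    obtain ⟨δ, hδ, hfreq⟩ := h'
    refine ⟨δ, hδ, ?_⟩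
    rw [Filter.frequently_atTop]
    intro N
    obtain ⟨n, hn, hd⟩ := hfreq N
    refine ⟨n, hn, ?_⟩
    rw [Real.dist_eq, sub_zero, abs_of_nonneg (norm_nonneg _)] at hd
    simpa [hy, ContinuousLinearMap.sub_apply] using hd
  obtain ⟨δ, hδpos, hfreq⟩ := hdiv
  set S : Set ℕ := {n | δ ≤ ‖y n ξ‖} with hSdef
  have hFne : (atTop ⊓ 𝓟 S).NeBot := Filter.frequently_iff_neBot.mp hfreq
  set 𝒰 : Ultrafilter ℕ := Ultrafilter.of (atTop ⊓ 𝓟 S) with h𝒰def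
  have h𝒰le : (𝒰 : Filter ℕ) ≤ atTop ⊓ 𝓟 S := Ultrafilter.of_le _
  have h𝒰top : (𝒰 : Filter ℕ) ≤ atTop := h𝒰le.trans inf_le_left
  have hS𝒰 : S ∈ (𝒰 : Filter ℕ) := le_principal_iff.mp (h𝒰le.trans inf_le_right)
  set g : ℕ → H →L[ℂ] H := fun n => y n * y n with hgdef
  have hCnn : (0:ℝ) ≤ C := le_trans (norm_nonneg _) (hC 0)
  set c : ℝ := (C + ‖l‖) * (C + ‖l‖) with hcdef
  have hyb : ∀ n, ‖y n‖ ≤ C + ‖l‖ := by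
    intro n
    rw [hy]
    calc ‖x n - l‖ ≤ ‖x n‖ + ‖l‖ := norm_sub_le _ _
      _ ≤ C + ‖l‖ := add_le_add_left (hC n) _
  have hgb : ∀ n, ‖g n‖ ≤ c := by
    intro n
    rw [hgdef, hcdef]
    exact (norm_mul_le _ _).trans
      (mul_le_mul (hyb n) (hyb n) (norm_nonneg _) (by positivity))
  have hcnn : (0:ℝ) ≤ c := le_trans (norm_nonneg _) (hgb 0)
  obtain ⟨G, hG⟩ := aux_ultralimit 𝒰 g c hgb
  have hysa : ∀ n, IsSelfAdjoint (y n) := fun n => ((hx n).2).sub hl.2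
  have hyR : ∀ n, y n ∈ R := by
    intro n
    have h1 : x n + (-1 : ℝ) • l ∈ R := hR.add_mem (hx n).1 (hR.smul_mem (-1) hl.1)
    have h2 : x n + (-1 : ℝ) • l = y n := by
      rw [hy, neg_one_smul, ← sub_eq_add_neg]
    rwa [h2] at h1
  have hgsa : ∀ n, IsSelfAdjoint (g n) := by
    intro n
    rw [hgdef, IsSelfAdjoint, star_mul, (hysa n).star_eq]
  have hgR : ∀ n, g n ∈ R := fun n => hR.mul_mem (hyR n) (hyR n)
  have hsymm : ∀ (a : H →L[ℂ] H), IsSelfAdjoint a → ∀ u v : H, ⟪a u, v⟫ = ⟪u, a v⟫ := by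
    intro a ha u v
    have h : ContinuousLinearMap.adjoint a = a := ContinuousLinearMap.isSelfAdjoint_iff'.mp ha
    conv_lhs => rw [← h, ContinuousLinearMap.adjoint_inner_left]
  have hginner : ∀ (n : ℕ) (v u : H), ⟪g n v, u⟫ = ⟪y n v, y n u⟫ := by
    intro n v u
    have h1 : g n v = (y n) ((y n) v) := by rw [hgdef]; rfl
    rw [h1, hsymm (y n) (hysa n)]
  have hGsym : ∀ u v : H, ⟪G u, v⟫ = ⟪u, G v⟫ := by
    intro u v
    refine tendsto_nhds_unique (hG u v) ?_
    have h2 : Tendsto (fun n => (starRingEnd ℂ) ⟪g n v, u⟫) (𝒰 : Filter ℕ)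
        (𝓝 ((starRingEnd ℂ) ⟪G v, u⟫)) := (Complex.continuous_conj.tendsto _).comp (hG v u)
    have h3 : ∀ n, (starRingEnd ℂ) ⟪g n v, u⟫ = ⟪g n u, v⟫ := by
      intro n
      rw [inner_conj_symm]
      exact (hsymm (g n) (hgsa n) u v).symm
    have h4 : ⟪u, G v⟫ = (starRingEnd ℂ) ⟪G v, u⟫ := (inner_conj_symm _ _).symm
    rw [h4]
    exact h2.congr h3
  have hGsa : IsSelfAdjoint G := by
    rw [ContinuousLinearMap.isSelfAdjoint_iff']
    ext u
    refine ext_inner_right ℂ fun v => ?_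
    rw [ContinuousLinearMap.adjoint_inner_left]
    exact (hGsym u v).symm
  have hGposre : ∀ v : H, 0 ≤ (⟪G v, v⟫).re := by
    intro v
    have h1 : Tendsto (fun n => (⟪g n v, v⟫).re) (𝒰 : Filter ℕ) (𝓝 ((⟪G v, v⟫).re)) :=
      (Complex.continuous_re.tendsto _).comp (hG v v)
    refine ge_of_tendsto h1 (Filter.Eventually.of_forall fun n => ?_)
    rw [hginner n v v]
    have h2 : RCLike.re ⟪y n v, y n v⟫ = ‖y n v‖ * ‖y n v‖ := inner_self_eq_norm_mul_norm _
    have h2' : (⟪y n v, y n v⟫).re = ‖y n v‖ * ‖y n v‖ := h2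
    rw [h2']
    positivity
  have hGpos : G.IsPositive := by
    refine ⟨ContinuousLinearMap.isSelfAdjoint_iff_isSymmetric.mp hGsa, fun v => ?_⟩
    exact hGposre v
  have hGξ : δ * δ ≤ (⟪G ξ, ξ⟫).re := by
    have h1 : Tendsto (fun n => (⟪g n ξ, ξ⟫).re) (𝒰 : Filter ℕ) (𝓝 ((⟪G ξ, ξ⟫).re)) :=
      (Complex.continuous_re.tendsto _).comp (hG ξ ξ)
    refine ge_of_tendsto h1 ?_
    refine Filter.eventually_iff.mpr (Filter.mem_of_superset hS𝒰 ?_)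
    intro n hn
    have hn' : δ ≤ ‖y n ξ‖ := hn
    have h2 : RCLike.re ⟪y n ξ, y n ξ⟫ = ‖y n ξ‖ * ‖y n ξ‖ := inner_self_eq_norm_mul_norm _
    have h2' : (⟪y n ξ, y n ξ⟫).re = ‖y n ξ‖ * ‖y n ξ‖ := h2
    have h3 : (⟪g n ξ, ξ⟫).re = ‖y n ξ‖ * ‖y n ξ‖ := by rw [hginner n ξ ξ, h2']
    show δ * δ ≤ (⟪g n ξ, ξ⟫).re
    rw [h3]
    exact mul_le_mul hn' hn' hδpos.le (norm_nonneg _)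
  have hGR : G ∈ R := by
    have h1 : Tendsto (fun n => (ContinuousLinearMapWOT.ofCLM : (H →L[ℂ] H) → (H →WOT[ℂ] H)) (g n)) (𝒰 : Filter ℕ)
        (𝓝 ((ContinuousLinearMapWOT.ofCLM : (H →L[ℂ] H) → (H →WOT[ℂ] H)) G)) := by
      rw [ContinuousLinearMapWOT.tendsto_iff_forall_dual_apply_tendsto]
      intro η ψ
      have hψ : ∀ u : H, ψ u = ⟪(InnerProductSpace.toDual ℂ H).symm ψ, u⟫ := fun u =>
        (InnerProductSpace.toDual_symm_apply).symm
      set v := (InnerProductSpace.toDual ℂ H).symm ψ with hv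
      have h2 : Tendsto (fun n => (starRingEnd ℂ) ⟪g n η, v⟫) (𝒰 : Filter ℕ)
          (𝓝 ((starRingEnd ℂ) ⟪G η, v⟫)) := (Complex.continuous_conj.tendsto _).comp (hG η v)
      have h3 : ∀ n, (starRingEnd ℂ) ⟪g n η, v⟫ = ψ (((ContinuousLinearMapWOT.ofCLM : (H →L[ℂ] H) → (H →WOT[ℂ] H)) (g n)) η) := by
        intro n
        rw [inner_conj_symm, ContinuousLinearMapWOT.ofCLM_apply, hψ (g n η)]
      have h4 : (starRingEnd ℂ) ⟪G η, v⟫ = ψ (((ContinuousLinearMapWOT.ofCLM : (H →L[ℂ] H) → (H →WOT[ℂ] H)) G) η) := by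
        rw [inner_conj_symm, ContinuousLinearMapWOT.ofCLM_apply, hψ (G η)]
      rw [← h4]
      exact h2.congr h3
    have h2 : (ContinuousLinearMapWOT.ofCLM : (H →L[ℂ] H) → (H →WOT[ℂ] H)) G ∈ ((ContinuousLinearMapWOT.ofCLM : (H →L[ℂ] H) → (H →WOT[ℂ] H))) '' R :=
      hR.wclosed.mem_of_tendsto h1 (Filter.Eventually.of_forall fun n => ⟨g n, hgR n, rfl⟩)
    obtain ⟨G', hG'R, hG'eq⟩ := h2
    have h3 : G' = G := ContinuousLinearMapWOT.ofCLM_injective hG'eq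
    rwa [← h3]
  have hub : ∀ w0 : H, (⟪G w0, w0⟫).re ≤ c * (‖w0‖ * ‖w0‖) := by
    intro w0
    have h1 : Tendsto (fun n => (⟪g n w0, w0⟫).re) (𝒰 : Filter ℕ) (𝓝 ((⟪G w0, w0⟫).re)) :=
      (Complex.continuous_re.tendsto _).comp (hG w0 w0)
    refine le_of_tendsto h1 (Filter.Eventually.of_forall fun n => ?_)
    have h2 : RCLike.re ⟪g n w0, w0⟫ ≤ ‖⟪g n w0, w0⟫‖ := RCLike.re_le_norm _
    have h2' : (⟪g n w0, w0⟫).re ≤ ‖⟪g n w0, w0⟫‖ := h2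
    refine h2'.trans ?_
    calc ‖⟪g n w0, w0⟫‖ ≤ ‖g n w0‖ * ‖w0‖ := norm_inner_le_norm _ _
      _ ≤ (c * ‖w0‖) * ‖w0‖ := by
          have h3 : ‖g n w0‖ ≤ ‖g n‖ * ‖w0‖ := (g n).le_opNorm w0
          have h4 : ‖g n‖ * ‖w0‖ ≤ c * ‖w0‖ := mul_le_mul_of_nonneg_right (hgb n) (norm_nonneg _)
          exact mul_le_mul_of_nonneg_right (h3.trans h4) (norm_nonneg _)
      _ = c * (‖w0‖ * ‖w0‖) := by ring
  have hkey : ∀ ε : ℝ, 0 < ε → ρ G ≤ c * ε := by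
    intro ε hε
    obtain ⟨p, hpA, hpproj, hpρ, hptend⟩ := hau ε hε
    obtain ⟨hpidem, hpsa⟩ := hpproj
    have hbridge : ∀ n, p * (x n - l) ^ 2 * p = p * g n * p := by
      intro n
      rw [hgdef, hy, pow_two]
    have hptend' : Tendsto (fun n => ‖p * g n * p‖) atTop (𝓝 0) := by
      simpa only [hbridge] using hptend
    have hpv : ∀ v : H, p (p v) = p v := by
      intro v
      have h := congrArg (fun T : H →L[ℂ] H => T v) hpidem
      simpa [ContinuousLinearMap.mul_apply] using h
    have hzero : ∀ u v' : H, ⟪G (p u), p v'⟫ = 0 := by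
      intro u v'
      refine tendsto_nhds_unique (hG (p u) (p v')) ?_
      have hb : ∀ n, ‖⟪g n (p u), p v'⟫‖ ≤ ‖p * g n * p‖ * (‖u‖ * ‖v'‖) := by
        intro n
        have he : ⟪g n (p u), p v'⟫ = ⟪(p * g n * p) u, v'⟫ := by
          have h1 : (p * g n * p) u = p ((g n) (p u)) := rfl
          rw [h1]
          exact (hsymm p hpsa _ v').symm
        rw [he]
        calc ‖⟪(p * g n * p) u, v'⟫‖ ≤ ‖(p * g n * p) u‖ * ‖v'‖ := norm_inner_le_norm _ _
          _ ≤ (‖p * g n * p‖ * ‖u‖) * ‖v'‖ :=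
              mul_le_mul_of_nonneg_right ((p * g n * p).le_opNorm u) (norm_nonneg _)
          _ = ‖p * g n * p‖ * (‖u‖ * ‖v'‖) := by ring
      have h0 : Tendsto (fun n => ⟪g n (p u), p v'⟫) atTop (𝓝 0) := by
        rw [tendsto_zero_iff_norm_tendsto_zero]
        refine squeeze_zero (fun n => norm_nonneg _) hb ?_
        simpa using hptend'.mul_const (‖u‖ * ‖v'‖)
      exact h0.mono_left h𝒰top
    have hGp : ∀ v : H, G (p v) = 0 := by
      intro v
      refine aux_kill hGsa hGposre ?_
      rw [hzero v v]
      rfl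
    have hpG : ∀ v : H, p (G v) = 0 := by
      intro v
      have h1 : ∀ u : H, ⟪p (G v), u⟫ = 0 := by
        intro u
        rw [hsymm p hpsa, hGsym, hGp u, inner_zero_right]
      have h2 := h1 (p (G v))
      rwa [inner_self_eq_zero] at h2
    set q : H →L[ℂ] H := 1 - p with hqdef
    have hq_eq : q * G * q = G := by
      ext v
      have h1 : (q * G * q) v = q (G (q v)) := rfl
      have h3 : G (q v) = G v := by
        rw [hqdef]
        simp only [ContinuousLinearMap.sub_apply, ContinuousLinearMap.one_apply, map_sub,
          hGp, sub_zero]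
      have h4 : q (G v) = G v := by
        rw [hqdef]
        simp only [ContinuousLinearMap.sub_apply, ContinuousLinearMap.one_apply, hpG, sub_zero]
      rw [h1, h3, h4]
    have hqsa : IsSelfAdjoint q := by
      rw [hqdef]
      exact (IsSelfAdjoint.one _).sub hpsa
    have hqidem : ∀ v : H, q (q v) = q v := by
      intro v
      rw [hqdef]
      simp only [ContinuousLinearMap.sub_apply, ContinuousLinearMap.one_apply, map_sub, hpv,
        sub_self, sub_zero]
    have hpos2 : (c • q - q * G * q).IsPositive := by
      constructor
      · have h1 : IsSelfAdjoint (c • q) := by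
          rw [IsSelfAdjoint, star_smul, star_trivial, hqsa.star_eq]
        have h2 : IsSelfAdjoint (q * G * q) := by
          rw [IsSelfAdjoint, star_mul, star_mul, hqsa.star_eq, hGsa.star_eq, ← mul_assoc]
        exact ContinuousLinearMap.isSelfAdjoint_iff_isSymmetric.mp (h1.sub h2)
      · intro v
        have e0 : (c • q - q * G * q) v = (c : ℂ) • (q v) - q (G (q v)) := by
          rw [ContinuousLinearMap.sub_apply, ContinuousLinearMap.smul_apply, Complex.coe_smul]
          rfl
        have e2 : ⟪q v, v⟫ = ⟪q v, q v⟫ := by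
          conv_lhs => rw [← hqidem v]
          exact hsymm q hqsa (q v) v
        have e1 : ⟪(c • q - q * G * q) v, v⟫ = (c : ℂ) * ⟪q v, q v⟫ - ⟪G (q v), q v⟫ := by
          rw [e0, inner_sub_left, inner_smul_left, Complex.conj_ofReal,
            hsymm q hqsa (G (q v)) v, e2]
        have e3 : RCLike.re ⟪q v, q v⟫ = ‖q v‖ * ‖q v‖ := inner_self_eq_norm_mul_norm _
        have e3' : (⟪q v, q v⟫).re = ‖q v‖ * ‖q v‖ := e3
        have e4 := hub (q v)
        have e5 : c * (⟪q v, q v⟫).re = c * (‖q v‖ * ‖q v‖) := by rw [e3']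
        show 0 ≤ (⟪(c • q - q * G * q) v, v⟫).re
        rw [e1]
        simp only [Complex.sub_re, Complex.mul_re, Complex.ofReal_re, Complex.ofReal_im,
          zero_mul, sub_zero]
        linarith
    have hρq : ρ q < ε := hpρ
    have hd : ρ G ≤ c * ρ q := by
      have h1 := hρ.pos _ hpos2
      have h2 : ρ (c • q - q * G * q) = c * ρ q - ρ (q * G * q) := by
        rw [map_sub, map_smul, smul_eq_mul]
      have h3 : ρ (q * G * q) = ρ G := by rw [hq_eq]
      rw [h2, h3] at h1
      linarith
    calc ρ G ≤ c * ρ q := hd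
      _ ≤ c * ε := mul_le_mul_of_nonneg_left hρq.le hcnn
  have hρGnn : 0 ≤ ρ G := hρ.pos G hGpos
  have hρG0 : ρ G = 0 := by
    by_contra hne
    have hGgt : 0 < ρ G := lt_of_le_of_ne hρGnn (Ne.symm hne)
    have hc1 : (0:ℝ) < c + 1 := by linarith
    have h1 := hkey (ρ G / (c + 1)) (by positivity)
    have h2 : c * (ρ G / (c + 1)) < ρ G := by
      rw [← mul_div_assoc, div_lt_iff₀ hc1]
      nlinarith
    linarith
  have hGzero : G = 0 := hρ.faithful G ⟨hGR, hGsa⟩ hGpos hρG0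
  rw [hGzero] at hGξ
  simp only [ContinuousLinearMap.zero_apply, inner_zero_left, Complex.zero_re] at hGξ
  nlinarith


end JW
end
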